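/- arXiv:1309.2749 — 4 statements merged into one kernel-verified Lean document; each statement's English description precedes it below -/
import Mathlib

section
/- Every cycle in a strongly 2-bipartite graph is chordless; in particular, strongly 2-bipartite graphs are unichord-free. -/
open SimpleGraph

/-- An edge `e` of `G` is a chord of the cycle `c` if it joins two vertices of `c`
but is not an edge of `c`. -/
def IsChord {V : Type} (G : SimpleGraph V) {v : V} (c : G.Walk v v) (e : Sym2 V) : Prop :=
  e ∈ G.edgeSet ∧ e ∉ c.edges ∧ ∀ x ∈ e, x ∈ c.support

/-- A graph is unichord-free if no cycle has a unique chord. -/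
def UnichordFree {V : Type} (G : SimpleGraph V) : Prop :=
  ∀ (v : V) (c : G.Walk v v), c.IsCycle → ¬ ∃! e : Sym2 V, IsChord G c e

/-- `G` contains a square, i.e. an induced cycle on four vertices. -/
def HasSquare {V : Type} (G : SimpleGraph V) : Prop :=
  ∃ a b c d : V, G.Adj a b ∧ G.Adj b c ∧ G.Adj c d ∧ G.Adj d a ∧
    ¬ G.Adj a c ∧ ¬ G.Adj b d ∧ a ≠ c ∧ b ≠ d

/-- A total colouring: adjacent vertices, adjacent edges, and incident
vertex-edge pairs get different colours. -/
def IsTotalColouring {V α : Type} (G : SimpleGraph V) (fv : V → α) (fe : Sym2 V → α) : Prop :=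
  (∀ u v, G.Adj u v → fv u ≠ fv v) ∧
  (∀ e₁ e₂, e₁ ∈ G.edgeSet → e₂ ∈ G.edgeSet → e₁ ≠ e₂ → (∃ x, x ∈ e₁ ∧ x ∈ e₂) →
    fe e₁ ≠ fe e₂) ∧
  (∀ x e, e ∈ G.edgeSet → x ∈ e → fv x ≠ fe e)

/-- `G` admits a total colouring with `k` colours. -/
def TotalColourable {V : Type} (G : SimpleGraph V) (k : ℕ) : Prop :=
  ∃ (fv : V → Fin k) (fe : Sym2 V → Fin k), IsTotalColouring G fv fe

/-- A proper edge colouring with `k` colours. -/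
def EdgeColourable {V : Type} (G : SimpleGraph V) (k : ℕ) : Prop :=
  ∃ fe : Sym2 V → ℕ, (∀ e ∈ G.edgeSet, fe e < k) ∧
    ∀ e₁ e₂, e₁ ∈ G.edgeSet → e₂ ∈ G.edgeSet → e₁ ≠ e₂ → (∃ x, x ∈ e₁ ∧ x ∈ e₂) →
      fe e₁ ≠ fe e₂

/-- Two-connectivity: at least three vertices and deleting any single vertex
leaves a connected graph. -/
def TwoConnected {V : Type} (G : SimpleGraph V) : Prop :=
  3 ≤ (Set.univ : Set V).ncard ∧ ∀ v : V, (G.induce ({v}ᶜ : Set V)).Connected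

/-- A graph is sparse if its vertices of degree at least 3 form an independent set. -/
def Sparse {V : Type} (G : SimpleGraph V) : Prop :=
  ∀ u v, G.Adj u v → ¬ (3 ≤ (G.neighborSet u).ncard ∧ 3 ≤ (G.neighborSet v).ncard)

/-- `G` is a cycle graph. -/
def IsCycleGraph {V : Type} (G : SimpleGraph V) : Prop :=
  G.Connected ∧ ∀ v : V, (G.neighborSet v).ncard = 2

/-- The Petersen graph: outer 5-cycle `a`, inner pentagram `b`, spokes `aᵢbᵢ`. -/
def petersen : SimpleGraph (Fin 5 ⊕ Fin 5) :=
  SimpleGraph.fromRel (fun x y => match x, y with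
    | Sum.inl i, Sum.inl j => j = i + 1
    | Sum.inr i, Sum.inr j => j = i + 2
    | Sum.inl i, Sum.inr j => i = j
    | Sum.inr _, Sum.inl _ => False)

/-- The Heawood graph: a 14-cycle together with the seven standard chords. -/
def heawood : SimpleGraph (Fin 14) :=
  SimpleGraph.fromRel (fun i j => j = i + 1 ∨
    (i, j) ∈ ([((0 : Fin 14), (9 : Fin 14)), (1, 6), (2, 11), (3, 8), (4, 13), (5, 10),
      (7, 12)] : List (Fin 14 × Fin 14)))

/-- Subdivide the edge `uv` of `G`: the new vertex is `Sum.inr ()`. -/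
def SubdivideEdge {V : Type} (G : SimpleGraph V) (u v : V) : SimpleGraph (V ⊕ Unit) :=
  SimpleGraph.fromRel (fun x y => match x, y with
    | Sum.inl a, Sum.inl b => G.Adj a b ∧ ¬ (s(a, b) = s(u, v))
    | Sum.inl a, Sum.inr _ => a = u ∨ a = v
    | Sum.inr _, Sum.inl _ => False
    | Sum.inr _, Sum.inr _ => False)

/-- `G` is obtained from `H` (up to isomorphism) by repeatedly subdividing edges
incident to at least one vertex of degree 2. -/
inductive IsSubdivisionOf : {W : Type} → SimpleGraph W → {U : Type} → SimpleGraph U → Prop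
  | refl : ∀ {W : Type} (H : SimpleGraph W) {U : Type} (G : SimpleGraph U),
      (G ≃g H) → IsSubdivisionOf H G
  | step : ∀ {W : Type} (H : SimpleGraph W) {U : Type} (G : SimpleGraph U) (u v : U),
      G.Adj u v → ((G.neighborSet u).ncard = 2 ∨ (G.neighborSet v).ncard = 2) →
      IsSubdivisionOf H G → ∀ {U' : Type} (G' : SimpleGraph U'),
      (G' ≃g SubdivideEdge G u v) → IsSubdivisionOf H G'

/-- A 2-extension of `H`: first delete a set `S` of vertices of `H`, then
subdivide edges incident to at least one vertex of degree 2. -/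
def IsTwoExtensionOf {W U : Type} (H : SimpleGraph W) (G : SimpleGraph U) : Prop :=
  ∃ S : Set W, IsSubdivisionOf (H.induce Sᶜ) G

/-- `G'` is the reduced graph of `G`: every branch of `G'` has length at most 2
(no degree-2 vertex has a neighbour of degree 2) and `G` is obtained from `G'`
by subdividing edges incident to degree-2 vertices. -/
def IsReducedGraphOf {W U : Type} (G' : SimpleGraph W) (G : SimpleGraph U) : Prop :=
  (∀ v : W, (G'.neighborSet v).ncard = 2 →
    ∀ w ∈ G'.neighborSet v, 3 ≤ (G'.neighborSet w).ncard) ∧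
  IsSubdivisionOf G' G

/-- There is an `ab`-path of `G` all of whose vertices lie in `S`. -/
def ContainsPathBetween {V : Type} (G : SimpleGraph V) (S : Set V) (a b : V) : Prop :=
  ∃ p : G.Walk a b, p.IsPath ∧ ∀ v ∈ p.support, v ∈ S

/-- The subgraph of `G` induced by `S` is precisely an `ab`-path. -/
def InducedIsPathGraph {V : Type} (G : SimpleGraph V) (S : Set V) (a b : V) : Prop :=
  ∃ p : G.Walk a b, p.IsPath ∧ (∀ v, v ∈ S ↔ v ∈ p.support) ∧
    ∀ u v, u ∈ S → v ∈ S → G.Adj u v → s(u, v) ∈ p.edges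

/-- `(X, Y, a, b)` is a split of a proper 2-cutset of `G`. -/
structure IsProper2CutsetSplit {V : Type} (G : SimpleGraph V) (X Y : Set V) (a b : V) :
    Prop where
  hne : a ≠ b
  hnadj : ¬ G.Adj a b
  hcover : ∀ v, v ∈ X ∨ v ∈ Y ∨ v = a ∨ v = b
  hdisj : Disjoint X Y
  haX : a ∉ X
  haY : a ∉ Y
  hbX : b ∉ X
  hbY : b ∉ Y
  hX2 : 2 ≤ X.ncard
  hY2 : 2 ≤ Y.ncard
  hsep : ∀ x ∈ X, ∀ y ∈ Y, ¬ G.Adj x y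
  hXpath : ContainsPathBetween G (X ∪ {a, b}) a b
  hXnotpath : ¬ InducedIsPathGraph G (X ∪ {a, b}) a b
  hYpath : ContainsPathBetween G (Y ∪ {a, b}) a b
  hYnotpath : ¬ InducedIsPathGraph G (Y ∪ {a, b}) a b

/-- `G` has a proper 2-cutset. -/
def HasProper2Cutset {V : Type} (G : SimpleGraph V) : Prop :=
  ∃ (a b : V) (X Y : Set V), IsProper2CutsetSplit G X Y a b

/-- `G` has a 1-cutset (a cutvertex) with split `(X, Y, v)`. -/
def Has1Cutset {V : Type} (G : SimpleGraph V) : Prop :=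
  ∃ (v : V) (X Y : Set V), X.Nonempty ∧ Y.Nonempty ∧ Disjoint X Y ∧ v ∉ X ∧ v ∉ Y ∧
    (∀ w, w ∈ X ∨ w ∈ Y ∨ w = v) ∧ ∀ x ∈ X, ∀ y ∈ Y, ¬ G.Adj x y

/-- `(X, Y, A, B)` is a split of a proper 1-join of `G`. -/
structure IsProper1JoinSplit {V : Type} (G : SimpleGraph V) (X Y A B : Set V) : Prop where
  hcover : ∀ v, v ∈ X ∨ v ∈ Y
  hdisj : Disjoint X Y
  hAX : A ⊆ X
  hBY : B ⊆ Y
  hA2 : 2 ≤ A.ncard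
  hB2 : 2 ≤ B.ncard
  hAstable : ∀ u ∈ A, ∀ v ∈ A, ¬ G.Adj u v
  hBstable : ∀ u ∈ B, ∀ v ∈ B, ¬ G.Adj u v
  hcomplete : ∀ u ∈ A, ∀ v ∈ B, G.Adj u v
  hother : ∀ u ∈ X, ∀ v ∈ Y, G.Adj u v → u ∈ A ∧ v ∈ B

/-- `G` has a proper 1-join. -/
def HasProper1Join {V : Type} (G : SimpleGraph V) : Prop :=
  ∃ X Y A B : Set V, IsProper1JoinSplit G X Y A B


lemma first_edge_mem' {V : Type} {G : SimpleGraph V} {u v : V} (p : G.Walk u v)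
    (hp : ¬ p.Nil) : s(u, p.getVert 1) ∈ p.edges := by
  cases p with
  | nil => simp at hp
  | cons h q =>
    rw [SimpleGraph.Walk.getVert_cons_succ]
    simp

lemma chord_deg_three {V : Type} [Fintype V] {G : SimpleGraph V} {x y : V}
    (d : G.Walk x x) (hd : d.IsCycle) (hadj : G.Adj x y) (hy : s(x, y) ∉ d.edges) :
    3 ≤ (G.neighborSet x).ncard := by
  cases d with
  | nil => exact absurd rfl hd.ne_nil
  | @cons _ b _ h p =>
    obtain ⟨c, hcdef⟩ : ∃ c, p.reverse.getVert 1 = c := ⟨_, rfl⟩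
    have hlen : 3 ≤ p.length + 1 := by
      simpa using hd.three_le_length
    have hpnil : ¬ p.Nil := by
      rw [SimpleGraph.Walk.not_nil_iff_lt_length]; omega
    have hprnil : ¬ p.reverse.Nil := by
      rw [SimpleGraph.Walk.not_nil_iff_lt_length, SimpleGraph.Walk.length_reverse]; omega
    have hcadj : G.Adj x c := hcdef ▸ p.reverse.adj_snd hprnil
    have hcedge : s(x, c) ∈ p.edges := by
      have h2 := first_edge_mem' p.reverse hprnil
      rw [SimpleGraph.Walk.edges_reverse, List.mem_reverse, hcdef] at h2
      exact h2
    have hnodup : (SimpleGraph.Walk.cons h p).edges.Nodup := hd.isTrail.edges_nodup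
    rw [SimpleGraph.Walk.edges_cons, List.nodup_cons] at hnodup
    have hbc : b ≠ c := by
      intro hbceq
      subst hbceq
      exact hnodup.1 hcedge
    rw [SimpleGraph.Walk.edges_cons, List.mem_cons] at hy
    push_neg at hy
    have hyb : y ≠ b := by
      rintro rfl; exact hy.1 rfl
    have hyc : y ≠ c := by
      rintro rfl; exact hy.2 hcedge
    have hsub : ({b, c, y} : Set V) ⊆ G.neighborSet x := by
      rintro z (rfl | rfl | rfl)
      · exact h
      · exact hcadj
      · exact hadj
    have hcard : ({b, c, y} : Set V).ncard = 3 := by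
      rw [Set.ncard_insert_of_notMem (by simp [hbc, hyb.symm]) (Set.toFinite _),
        Set.ncard_pair hyc.symm]
    calc 3 = ({b, c, y} : Set V).ncard := hcard.symm
      _ ≤ (G.neighborSet x).ncard := Set.ncard_le_ncard hsub (Set.toFinite _)

/-- Every cycle in a strongly 2-bipartite graph is chordless; in particular,
strongly 2-bipartite graphs are unichord-free. -/
theorem stmt0 {V : Type} [Fintype V] (G : SimpleGraph V) (X Y : Set V)
    (hpart : ∀ v, v ∈ X ∨ v ∈ Y) (hdisj : Disjoint X Y)
    (hbip : ∀ u v, G.Adj u v → (u ∈ X ∧ v ∈ Y) ∨ (u ∈ Y ∧ v ∈ X))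
    (hX : ∀ x ∈ X, (G.neighborSet x).ncard = 2)
    (hY : ∀ y ∈ Y, 3 ≤ (G.neighborSet y).ncard)
    (hsq : ¬ HasSquare G) :
    (∀ (v : V) (c : G.Walk v v), c.IsCycle → ∀ e : Sym2 V, ¬ IsChord G c e) ∧
      UnichordFree G := by
  classical
  have main : ∀ (v : V) (c : G.Walk v v), c.IsCycle → ∀ e : Sym2 V, ¬ IsChord G c e := by
    intro v c hc e
    induction e with
    | _ a b =>
      rintro ⟨he, hne, hsupp⟩
      rw [SimpleGraph.mem_edgeSet] at he
      have key : ∀ x y : V, G.Adj x y → x ∈ X → s(x, y) = s(a, b) → False := by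
        intro x y hxy hxX hxye
        have hxs : x ∈ c.support := by
          apply hsupp
          rw [← hxye]; simp
        have hd := hc.rotate hxs
        have hdeg := chord_deg_three (c.rotate x hxs) hd hxy (by
          rw [(c.rotate_edges x hxs).mem_iff, hxye]
          exact hne)
        rw [hX x hxX] at hdeg
        omega
      rcases hbip a b he with ⟨haX, _⟩ | ⟨_, hbX⟩
      · exact key a b he haX rfl
      · exact key b a he.symm hbX (Sym2.eq_swap)
  refine ⟨main, ?_⟩
  intro v c hc ⟨e, he, _⟩
  exact main v c hc e he
end

section
/- Let P = p_1…p_k be a path with k ≥ 3 vertices. Suppose the four elements p_1, p_1p_2, p_{k-1}p_k, p_k are precoloured with colours from {1,2,3} such that elements at distance at most 2 along the path receive different colours, and it is not the case that both c(p_1)=c(p_{k-1}p_k) and c(p_1p_2)=c(p_k). Then this precolouring extends to a total-colouring of P with 4 colours. -/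
open SimpleGraph

set_option synthInstance.maxSize 4000 in
set_option maxHeartbeats 2000000 in
lemma base4' : ∀ c₁ c₂ c₃ c₄ : Fin 4, c₁ ≠ c₂ → c₃ ≠ c₄ → ¬(c₁ = c₃ ∧ c₂ = c₄) →
    ∃ x y z : Fin 4, c₂ ≠ x ∧ x ≠ y ∧ y ≠ z ∧ z ≠ c₃ ∧ c₁ ≠ x ∧ c₂ ≠ y ∧ x ≠ z ∧
      y ≠ c₃ ∧ z ≠ c₄ := by decide

set_option synthInstance.maxSize 4000 in
lemma stepchoice' : ∀ c₁ c₂ c₃ c₄ : Fin 4, c₃ ≠ c₄ →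
    ∃ d₃ d₄ : Fin 4, d₃ ≠ d₄ ∧ d₃ ≠ c₃ ∧ d₄ ≠ c₃ ∧ d₄ ≠ c₄ ∧ ¬(c₁ = d₃ ∧ c₂ = d₄) := by
  decide

def GoodSeq (k : ℕ) (c₁ c₂ c₃ c₄ : Fin 4) : Prop :=
  ∃ g : ℕ → Fin 4, g 0 = c₁ ∧ g 1 = c₂ ∧ g (2*k-3) = c₃ ∧ g (2*k-2) = c₄ ∧
    (∀ j, j + 1 ≤ 2*k-2 → g j ≠ g (j+1)) ∧ (∀ j, j + 2 ≤ 2*k-2 → g j ≠ g (j+2))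

lemma seq4 : ∀ k, 4 ≤ k → ∀ c₁ c₂ c₃ c₄ : Fin 4, c₁ ≠ c₂ → c₃ ≠ c₄ →
    ¬(c₁ = c₃ ∧ c₂ = c₄) → GoodSeq k c₁ c₂ c₃ c₄ := by
  intro k hk
  induction k, hk using Nat.le_induction with
  | base =>
    intro c₁ c₂ c₃ c₄ h12 h34 hno
    obtain ⟨x, y, z, p1, p2, p3, p4, q1, q2, q3, q4, q5⟩ := base4' c₁ c₂ c₃ c₄ h12 h34 hno
    refine ⟨fun j => [c₁, c₂, x, y, z, c₃, c₄].getD j c₁, by simp, by simp, by simp, by simp,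
      ?_, ?_⟩
    · intro j hj
      have hj' : j ≤ 5 := by omega
      interval_cases j
      · simpa using h12
      · simpa using p1
      · simpa using p2
      · simpa using p3
      · simpa using p4
      · simpa using h34
    · intro j hj
      have hj' : j ≤ 4 := by omega
      interval_cases j
      · simpa using q1
      · simpa using q2
      · simpa using q3
      · simpa using q4
      · simpa using q5
  | succ k hk ih =>
    intro c₁ c₂ c₃ c₄ h12 h34 hno
    obtain ⟨d₃, d₄, hd34, hd3, hd43, hd44, hdno⟩ := stepchoice' c₁ c₂ c₃ c₄ h34
    obtain ⟨g, hg0, hg1, hg3, hg4, hA, hB⟩ := ih c₁ c₂ d₃ d₄ h12 hd34 hdno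
    set g' : ℕ → Fin 4 := fun j => if j = 2*k-1 then c₃ else if j = 2*k then c₄ else g j
      with hg'
    have hval : ∀ j, j ≠ 2*k-1 → j ≠ 2*k → g' j = g j := by
      intro j h1 h2; simp [hg', if_neg h1, if_neg h2]
    have hv1 : g' (2*k-1) = c₃ := by simp [hg']
    have hv2 : g' (2*k) = c₄ := by
      simp [hg', show ¬ (2*k = 2*k-1) by omega]
    refine ⟨g', ?_, ?_, ?_, ?_, ?_, ?_⟩
    · rw [hval 0 (by omega) (by omega)]; exact hg0
    · rw [hval 1 (by omega) (by omega)]; exact hg1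
    · rw [show 2*(k+1)-3 = 2*k-1 by omega, hv1]
    · rw [show 2*(k+1)-2 = 2*k by omega, hv2]
    · intro j hj
      rcases (show j + 1 ≤ 2*k-2 ∨ j = 2*k-2 ∨ j = 2*k-1 by omega) with h | h | h
      · rw [hval j (by omega) (by omega), hval (j+1) (by omega) (by omega)]
        exact hA j h
      · subst h
        rw [hval _ (by omega) (by omega), show 2*k-2+1 = 2*k-1 by omega, hv1, hg4]
        exact hd43
      · subst h
        rw [show 2*k-1+1 = 2*k by omega, hv1, hv2]
        exact h34
    · intro j hj
      rcases (show j + 2 ≤ 2*k-2 ∨ j = 2*k-3 ∨ j = 2*k-2 by omega) with h | h | h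
      · rw [hval j (by omega) (by omega), hval (j+2) (by omega) (by omega)]
        exact hB j h
      · subst h
        rw [hval _ (by omega) (by omega), show 2*k-3+2 = 2*k-1 by omega, hv1, hg3]
        exact hd3
      · subst h
        rw [hval _ (by omega) (by omega), show 2*k-2+2 = 2*k by omega, hv2, hg4]
        exact hd44

lemma seq3 (c₁ c₂ c₃ c₄ : Fin 4)
    (h₁ : c₁.val < 3) (h₂ : c₂.val < 3) (h₃ : c₃.val < 3) (h₄ : c₄.val < 3)
    (h12 : c₁ ≠ c₂) (h34 : c₃ ≠ c₄) (h23 : c₂ ≠ c₃) : GoodSeq 3 c₁ c₂ c₃ c₄ := by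
  have n1 : c₁ ≠ 3 := by intro h; subst h; revert h₁; decide
  have n2 : c₂ ≠ 3 := by intro h; subst h; revert h₂; decide
  have n3 : c₃ ≠ 3 := by intro h; subst h; revert h₃; decide
  have n4 : c₄ ≠ 3 := by intro h; subst h; revert h₄; decide
  refine ⟨fun j => [c₁, c₂, 3, c₃, c₄].getD j c₁, by simp, by simp, by simp, by simp, ?_, ?_⟩
  · intro j hj
    have hj' : j ≤ 3 := by omega
    interval_cases j
    · simpa using h12
    · simpa using n2
    · simpa using n3.symm
    · simpa using h34
  · intro j hj
    have hj' : j ≤ 2 := by omega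
    interval_cases j
    · simpa using n1
    · simpa using h23
    · simpa using n4.symm

lemma seqAll (k : ℕ) (hk : 3 ≤ k) (c₁ c₂ c₃ c₄ : Fin 4)
    (h₁ : c₁.val < 3) (h₂ : c₂.val < 3) (h₃ : c₃.val < 3) (h₄ : c₄.val < 3)
    (h12 : c₁ ≠ c₂) (h34 : c₃ ≠ c₄) (hk3 : k = 3 → c₂ ≠ c₃)
    (hno : ¬ (c₁ = c₃ ∧ c₂ = c₄)) : GoodSeq k c₁ c₂ c₃ c₄ := by
  rcases eq_or_lt_of_le hk with h | h
  · exact h.symm ▸ seq3 c₁ c₂ c₃ c₄ h₁ h₂ h₃ h₄ h12 h34 (hk3 h.symm)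
  · exact seq4 k (by omega) c₁ c₂ c₃ c₄ h12 h34 hno

/-- A suitable precolouring of the end elements of a path extends to a
4-total-colouring of the whole path.  Colours `{1,2,3}` are represented by the
values of `Fin 4` with `val < 3`. -/
theorem stmt1 (k : ℕ) (hk : 3 ≤ k) (c₁ c₂ c₃ c₄ : Fin 4)
    (h₁ : c₁.val < 3) (h₂ : c₂.val < 3) (h₃ : c₃.val < 3) (h₄ : c₄.val < 3)
    (h12 : c₁ ≠ c₂) (h34 : c₃ ≠ c₄) (hk3 : k = 3 → c₂ ≠ c₃)
    (hno : ¬ (c₁ = c₃ ∧ c₂ = c₄)) :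
    ∃ (fv : Fin k → Fin 4) (fe : Sym2 (Fin k) → Fin 4),
      IsTotalColouring (SimpleGraph.pathGraph k) fv fe ∧
      fv ⟨0, by omega⟩ = c₁ ∧ fe s((⟨0, by omega⟩ : Fin k), (⟨1, by omega⟩ : Fin k)) = c₂ ∧
      fe s((⟨k - 2, by omega⟩ : Fin k), (⟨k - 1, by omega⟩ : Fin k)) = c₃ ∧
      fv ⟨k - 1, by omega⟩ = c₄ := by
  have hgood : GoodSeq k c₁ c₂ c₃ c₄ := seqAll k hk c₁ c₂ c₃ c₄ h₁ h₂ h₃ h₄ h12 h34 hk3 hno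
  obtain ⟨g, hg0, hg1, hg3, hg4, hA, hB⟩ := hgood
  refine ⟨fun i => g (2 * i.val),
    Sym2.lift ⟨fun a b => g (a.val + b.val), fun a b => congrArg g (Nat.add_comm _ _)⟩,
    ⟨?_, ?_, ?_⟩, ?_, ?_, ?_, ?_⟩
  · -- vertices
    intro u v huv
    rw [pathGraph_adj] at huv
    have hu := u.isLt; have hv := v.isLt
    show g (2 * u.val) ≠ g (2 * v.val)
    rcases huv with h | h
    · rw [show 2 * v.val = 2 * u.val + 2 by omega]
      exact hB _ (by omega)
    · rw [show 2 * u.val = 2 * v.val + 2 by omega]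
      exact (hB _ (by omega)).symm
  · -- edges
    intro e₁ e₂ he₁ he₂ hne hsh
    revert he₁ he₂ hne hsh
    refine Sym2.inductionOn₂ e₁ e₂ (fun a b c d => ?_)
    intro he₁ he₂ hne hsh
    rw [SimpleGraph.mem_edgeSet, pathGraph_adj] at he₁ he₂
    obtain ⟨x, hx1, hx2⟩ := hsh
    rw [Sym2.mem_iff] at hx1 hx2
    rw [Sym2.lift_mk, Sym2.lift_mk]
    simp only []
    have hne' : ¬(a = c ∧ b = d ∨ a = d ∧ b = c) := by
      intro h; apply hne
      rcases h with ⟨h1, h2⟩ | ⟨h1, h2⟩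
      · rw [h1, h2]
      · rw [h1, h2, Sym2.eq_swap]
    have ha := a.isLt; have hb := b.isLt; have hc := c.isLt; have hd := d.isLt
    have hax : x = a ∨ x = b := hx1
    have hcx : x = c ∨ x = d := hx2
    have hnat : ¬(a.val = c.val ∧ b.val = d.val ∨ a.val = d.val ∧ b.val = c.val) := by
      intro h; apply hne'
      rcases h with ⟨h1, h2⟩ | ⟨h1, h2⟩
      · exact Or.inl ⟨Fin.ext h1, Fin.ext h2⟩
      · exact Or.inr ⟨Fin.ext h1, Fin.ext h2⟩
    have hax' : x.val = a.val ∨ x.val = b.val := by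
      rcases hax with h | h <;> [exact Or.inl (by rw [h]); exact Or.inr (by rw [h])]
    have hcx' : x.val = c.val ∨ x.val = d.val := by
      rcases hcx with h | h <;> [exact Or.inl (by rw [h]); exact Or.inr (by rw [h])]
    have key : a.val + b.val + 2 = c.val + d.val ∨ c.val + d.val + 2 = a.val + b.val := by
      omega
    rcases key with h | h
    · rw [← h]; exact hB _ (by omega)
    · rw [← h]; exact (hB _ (by omega)).symm
  · -- incidence
    intro x e
    refine Sym2.ind (fun a b => ?_) e
    intro he hxe
    rw [SimpleGraph.mem_edgeSet, pathGraph_adj] at he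
    rw [Sym2.mem_iff] at hxe
    rw [Sym2.lift_mk]
    show g (2 * x.val) ≠ g (a.val + b.val)
    have ha := a.isLt; have hb := b.isLt; have hx := x.isLt
    have hxe' : x.val = a.val ∨ x.val = b.val := by
      rcases hxe with h | h <;> [exact Or.inl (by rw [h]); exact Or.inr (by rw [h])]
    have key : 2 * x.val + 1 = a.val + b.val ∨ a.val + b.val + 1 = 2 * x.val := by omega
    rcases key with h | h
    · rw [← h]; exact hA _ (by omega)
    · rw [← h]; exact (hA _ (by omega)).symm
  · exact hg0
  · rw [Sym2.lift_mk]; exact hg1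
  · rw [Sym2.lift_mk]
    simp only []
    rw [show (⟨k-2, by omega⟩ : Fin k).val + (⟨k-1, by omega⟩ : Fin k).val = 2*k-3 by
      simp; omega]
    exact hg3
  · simp only []
    rw [show 2 * (⟨k-1, by omega⟩ : Fin k).val = 2*k-2 by simp; omega]
    exact hg4
end

section
/- Let G be a 2-connected unichord-free graph that is not a cycle, and let G' be its reduced graph (obtained by contracting every branch of length at least 3 to a branch of length 2). Then G' is 2-connected and unichord-free. -/
open SimpleGraph

section AuxiliaryLemmas

open SimpleGraph Walk

variable {U : Type} {G : SimpleGraph U} {u v : U}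

lemma reach_map {α β : Type} {A : SimpleGraph α} {B : SimpleGraph β} (f : α → β)
    (h : ∀ x y, A.Adj x y → f x = f y ∨ B.Adj (f x) (f y)) {x y : α}
    (hr : A.Reachable x y) : B.Reachable (f x) (f y) := by
  obtain ⟨p⟩ := hr
  induction p with
  | nil => exact Reachable.refl _
  | cons hab p ih =>
    rcases h _ _ hab with he | ha
    · exact he ▸ ih
    · exact ha.reachable.trans ih

lemma no_adj_not_reachable {α : Type} {A : SimpleGraph α} (hA : ∀ x y, ¬ A.Adj x y)
    {x y : α} (hxy : x ≠ y) : ¬ A.Reachable x y := by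
  rintro ⟨p⟩
  cases p with
  | nil => exact hxy rfl
  | cons h _ => exact hA _ _ h

lemma first_edge {x y : U} {p : G.Walk x y} (hp : p.support.Nodup) {e : Sym2 U}
    (he : e ∈ p.edges) (hx : x ∈ e) :
    ∃ (z : U) (hz : G.Adj x z) (r : G.Walk z y), p = Walk.cons hz r ∧ e = s(x, z) := by
  induction p with
  | nil => simp at he
  | cons h r ih =>
    rw [Walk.edges_cons, List.mem_cons] at he
    rcases he with rfl | he
    · exact ⟨_, h, r, rfl, rfl⟩
    · exfalso
      obtain ⟨w, rfl⟩ := Sym2.mem_iff_exists.mp hx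
      have := Walk.fst_mem_support_of_mem_edges r he
      rw [Walk.support_cons, List.nodup_cons] at hp
      exact hp.1 this

lemma end_mem_tail {a : U} {c : G.Walk a a} (h : c ≠ Walk.nil) : a ∈ c.support.tail := by
  cases c with
  | nil => exact absurd rfl h
  | cons h q => simpa using q.end_mem_support

lemma isCycle_reverse {x : U} {d : G.Walk x x} (hd : d.IsCycle) : d.reverse.IsCycle := by
  rw [Walk.isCycle_def]
  refine ⟨hd.isCircuit.isTrail.reverse, ?_, ?_⟩
  · intro hn
    have h3 := hd.three_le_length
    have : d.reverse.length = 0 := by rw [hn]; rfl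
    rw [Walk.length_reverse] at this
    omega
  · cases d with
    | nil => exact absurd rfl hd.ne_nil
    | @cons _ w _ h q =>
      have hq : q.support.Nodup := ((Walk.cons_isCycle_iff q h).mp hd).1.support_nodup
      rw [Walk.support_reverse, Walk.support_cons]
      have hlast : q.support.getLast (by simp) = x := Walk.getLast_support q
      have hdecomp : q.support.dropLast ++ [x] = q.support := by
        conv_rhs => rw [← List.dropLast_append_getLast (l := q.support) (by simp)]
        rw [hlast]
      rw [← hdecomp]
      simp only [List.reverse_cons, List.reverse_append, List.reverse_cons, List.reverse_nil,
        List.nil_append, List.cons_append, List.tail_cons]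
      rw [← hdecomp] at hq
      have h1 : q.support.dropLast.Nodup := (List.nodup_append'.mp hq).1
      have h2 : x ∉ q.support.dropLast := by
        intro hx
        exact (List.nodup_append'.mp hq).2.2 hx (by simp)
      rw [List.nodup_append']
      simp_all [List.nodup_reverse, List.disjoint_singleton]

lemma sub_adj_ll {a b : U} :
    (SubdivideEdge G u v).Adj (Sum.inl a) (Sum.inl b) ↔ G.Adj a b ∧ s(a, b) ≠ s(u, v) := by
  constructor
  · intro h
    rw [SubdivideEdge, fromRel_adj] at h
    obtain ⟨hne, h | h⟩ := h
    · exact ⟨h.1, h.2⟩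
    · exact ⟨h.1.symm, fun hh => h.2 (by rwa [Sym2.eq_swap] at hh)⟩
  · rintro ⟨h, hn⟩
    rw [SubdivideEdge, fromRel_adj]
    exact ⟨by simp [h.ne], Or.inl ⟨h, hn⟩⟩

lemma sub_adj_lr {a : U} {t : Unit} :
    (SubdivideEdge G u v).Adj (Sum.inl a) (Sum.inr t) ↔ a = u ∨ a = v := by
  rw [SubdivideEdge, fromRel_adj]
  constructor
  · rintro ⟨-, h | h⟩
    · exact h
    · exact h.elim
  · intro h
    exact ⟨by simp, Or.inl h⟩

lemma sub_adj_rr {s t : Unit} : ¬ (SubdivideEdge G u v).Adj (Sum.inr s) (Sum.inr t) := by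
  rw [SubdivideEdge, fromRel_adj]
  rintro ⟨-, h | h⟩ <;> exact h

lemma sub_edge_mem {e : Sym2 (U ⊕ Unit)} (he : e ∈ (SubdivideEdge G u v).edgeSet) :
    (∃ a b : U, e = s(Sum.inl a, Sum.inl b) ∧ G.Adj a b ∧ s(a, b) ≠ s(u, v)) ∨
    e = s(Sum.inl u, Sum.inr ()) ∨ e = s(Sum.inl v, Sum.inr ()) := by
  induction e using Sym2.ind with
  | _ x y =>
    rw [SimpleGraph.mem_edgeSet] at he
    match x, y with
    | Sum.inl a, Sum.inl b =>
      obtain ⟨h1, h2⟩ := sub_adj_ll.mp he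
      exact Or.inl ⟨a, b, rfl, h1, h2⟩
    | Sum.inl a, Sum.inr t =>
      rcases sub_adj_lr.mp he with rfl | rfl
      · exact Or.inr (Or.inl rfl)
      · exact Or.inr (Or.inr rfl)
    | Sum.inr t, Sum.inl a =>
      rcases sub_adj_lr.mp he.symm with rfl | rfl
      · exact Or.inr (Or.inl (Sym2.eq_swap))
      · exact Or.inr (Or.inr (Sym2.eq_swap))
    | Sum.inr s, Sum.inr t => exact absurd he sub_adj_rr

/-- The homomorphism from `G` minus the edge `uv` into the subdivision. -/
def homInl (G : SimpleGraph U) (u v : U) : (G.deleteEdges {s(u, v)}) →g (SubdivideEdge G u v) where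
  toFun := Sum.inl
  map_rel' := by
    intro a b h
    rw [deleteEdges_adj] at h
    exact sub_adj_ll.mpr ⟨h.1, by simpa using h.2⟩

lemma homInl_injective : Function.Injective ⇑(homInl G u v) := fun a b h => Sum.inl.inj h

/-- Lift a walk of `G` avoiding the edge `uv` to the subdivision. -/
def liftW {x y : U} (p : G.Walk x y) (hp : s(u, v) ∉ p.edges) :
    (SubdivideEdge G u v).Walk (Sum.inl x) (Sum.inl y) :=
  (p.toDeleteEdges {s(u, v)} (fun _ he hs => hp (Set.mem_singleton_iff.mp hs ▸ he))).map
    (homInl G u v)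

lemma liftW_support {x y : U} (p : G.Walk x y) (hp : s(u, v) ∉ p.edges) :
    (liftW p hp).support = p.support.map Sum.inl := by
  rw [liftW]
  exact (Walk.support_map ..).trans (congrArg (List.map _) (Walk.support_transfer ..))

lemma liftW_edges {x y : U} (p : G.Walk x y) (hp : s(u, v) ∉ p.edges) :
    (liftW p hp).edges = p.edges.map (Sym2.map Sum.inl) := by
  rw [liftW]
  exact (Walk.edges_map ..).trans (congrArg (List.map _) (Walk.edges_transfer ..))

lemma liftW_isPath {x y : U} {p : G.Walk x y} (hp : s(u, v) ∉ p.edges) (h : p.IsPath) :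
    (liftW p hp).IsPath := by
  unfold liftW
  exact (Walk.map_isPath_iff_of_injective homInl_injective).mpr (h.toDeleteEdges _ _ _)

lemma liftW_isCycle {x : U} {p : G.Walk x x} (hp : s(u, v) ∉ p.edges) (h : p.IsCycle) :
    (liftW p hp).IsCycle := by
  unfold liftW
  exact (Walk.map_isCycle_iff_of_injective homInl_injective).mpr (h.toDeleteEdges _ _ _)

lemma based_neighbors' {x : U} {d : G.Walk x x} (hd : d.IsCycle) :
    ∃ w b : U, w ≠ b ∧ s(x, w) ∈ d.edges ∧ s(x, b) ∈ d.edges := by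
  cases d with
  | nil => exact absurd rfl hd.ne_nil
  | @cons _ w _ h q =>
    have hq := (Walk.cons_isCycle_iff q h).mp hd
    -- q : G.Walk w x, nonnil; decompose q.reverse : G.Walk x w
    obtain ⟨b, hxb, r, hr⟩ := Walk.exists_eq_cons_of_ne h.ne q.reverse
    have hbq : s(x, b) ∈ q.edges := by
      have : s(x, b) ∈ q.reverse.edges := by rw [hr]; simp
      rwa [Walk.edges_reverse, List.mem_reverse] at this
    have hxw : s(x, w) ∉ q.edges := by
      have := hd.isCircuit.isTrail.edges_nodup
      rw [Walk.edges_cons, List.nodup_cons] at this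
      exact this.1
    refine ⟨w, b, ?_, by simp, Walk.edges_cons _ _ ▸ List.mem_cons_of_mem _ hbq⟩
    rintro rfl
    exact hxw hbq

lemma deg_ne_two_of_chord {a : U} {c : G.Walk a a} (hc : c.IsCycle) {x y : U}
    (hx : x ∈ c.support) (hxy : G.Adj x y) (hne : s(x, y) ∉ c.edges) :
    (G.neighborSet x).ncard ≠ 2 := by
  classical
  intro h2
  obtain ⟨w, b, hwb, hw, hb⟩ := based_neighbors' (hc.rotate hx)
  rw [(Walk.rotate_edges c x hx).mem_iff] at hw hb
  have hadjw : G.Adj x w := Walk.adj_of_mem_edges c hw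
  have hadjb : G.Adj x b := Walk.adj_of_mem_edges c hb
  have hyw : y ≠ w := fun h => hne (h ▸ hw)
  have hyb : y ≠ b := fun h => hne (h ▸ hb)
  have hfin : (G.neighborSet x).Finite := by
    by_contra hinf
    rw [Set.Infinite.ncard hinf] at h2
    omega
  have hsub : ({y, w, b} : Set U) ⊆ G.neighborSet x := by
    rintro z (rfl | rfl | rfl)
    · exact hxy
    · exact hadjw
    · exact hadjb
  have h3 : ({y, w, b} : Set U).ncard = 3 :=
    Set.ncard_eq_three.mpr ⟨y, w, b, hyw, hyb, hwb, rfl⟩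
  have := Set.ncard_le_ncard hsub hfin
  omega

/-- Decompose a cycle through the edge `uv` into that edge plus a path. -/
lemma cycle_decomp {a : U} {c : G.Walk a a} (hc : c.IsCycle) (he : s(u, v) ∈ c.edges) :
    ∃ (h : G.Adj u v) (p : G.Walk v u), (Walk.cons h p).IsCycle ∧
      (∀ e, e ∈ (Walk.cons h p).edges ↔ e ∈ c.edges) ∧
      (∀ x, x ∈ (Walk.cons h p).support ↔ x ∈ c.support) := by
  classical
  have hu : u ∈ c.support := c.fst_mem_support_of_mem_edges he
  set d := c.rotate u hu with hd_def
  have hd : d.IsCycle := hc.rotate hu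
  have hedges : ∀ e, e ∈ d.edges ↔ e ∈ c.edges := fun e => (Walk.rotate_edges c u hu).mem_iff
  have hsupp : ∀ x, x ∈ d.support ↔ x ∈ c.support := by
    intro x
    rw [Walk.mem_support_iff, Walk.mem_support_iff,
      (Walk.support_rotate c u hu).mem_iff]
    constructor
    · rintro (rfl | h)
      · rcases (c.mem_support_iff).mp hu with h | h
        · exact Or.inl h
        · exact Or.inr h
      · exact Or.inr h
    · rintro (rfl | h)
      · exact Or.inr (end_mem_tail hc.ne_nil)
      · exact Or.inr h
  have hed : s(u, v) ∈ d.edges := (hedges _).mpr he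
  clear_value d
  clear hd_def
  -- find the decomposition of d or d.reverse
  suffices hsuff : ∃ (h : G.Adj u v) (p : G.Walk v u),
      (Walk.cons h p = d ∨ Walk.cons h p = d.reverse) by
    obtain ⟨h, p, hp | hp⟩ := hsuff
    · exact ⟨h, p, hp ▸ hd, fun e => hp ▸ hedges e, fun x => hp ▸ hsupp x⟩
    · refine ⟨h, p, hp ▸ isCycle_reverse hd, fun e => ?_, fun x => ?_⟩
      · rw [hp, Walk.edges_reverse, List.mem_reverse]; exact hedges e
      · rw [hp, Walk.support_reverse, List.mem_reverse]; exact hsupp x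
  cases d with
  | nil => simp at hed
  | @cons _ w _ h₁ q =>
    by_cases hw : w = v
    · subst hw; exact ⟨h₁, q, Or.inl rfl⟩
    · have huq : s(u, v) ∈ q.edges := by
        rw [Walk.edges_cons, List.mem_cons] at hed
        rcases hed with h | h
        · exact absurd (Sym2.congr_right.mp h.symm) hw
        · exact h
      have hqpath : q.IsPath := ((Walk.cons_isCycle_iff q h₁).mp hd).1
      have huqr : s(u, v) ∈ q.reverse.edges := by
        rwa [Walk.edges_reverse, List.mem_reverse]
      obtain ⟨z, hz, r, hr, hez⟩ :=
        first_edge hqpath.reverse.support_nodup huqr (Sym2.mem_mk_left u v)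
      have hzv : z = v := Sym2.congr_right.mp hez.symm
      subst hzv
      refine ⟨hz, r.append (Walk.cons h₁.symm Walk.nil), Or.inr ?_⟩
      rw [Walk.reverse_cons, hr, Walk.cons_append]

lemma sub_edge_of {e : Sym2 U} (he : e ∈ G.edgeSet) (hne : e ≠ s(u, v)) :
    Sym2.map Sum.inl e ∈ (SubdivideEdge G u v).edgeSet := by
  induction e using Sym2.ind with
  | _ x y =>
    rw [Sym2.map_pair_eq, SimpleGraph.mem_edgeSet]
    exact sub_adj_ll.mpr ⟨(G.mem_edgeSet).mp he, hne⟩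

lemma uf_sub (huv : G.Adj u v)
    (hdeg : (G.neighborSet u).ncard = 2 ∨ (G.neighborSet v).ncard = 2)
    (h : UnichordFree (SubdivideEdge G u v)) : UnichordFree G := by
  rintro a c hc ⟨e₀, he₀, huniq⟩
  have hene : e₀ ≠ s(u, v) := by
    rintro rfl
    obtain ⟨he1, he2, he3⟩ := he₀
    have hu : u ∈ c.support := he3 u (by simp)
    have hv : v ∈ c.support := he3 v (by simp)
    rcases hdeg with hd | hd
    · exact deg_ne_two_of_chord hc hu huv he2 hd
    · refine deg_ne_two_of_chord hc hv huv.symm ?_ hd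
      rwa [Sym2.eq_swap]
  by_cases hin : s(u, v) ∈ c.edges
  · -- the cycle passes through the subdivided edge
    obtain ⟨h', p, hcyc, hedge, hsupp⟩ := cycle_decomp hc hin
    have hcons := (Walk.cons_isCycle_iff p h').mp hcyc
    set P' := liftW p hcons.2 with hP'
    have hPs : P'.support = p.support.map Sum.inl := liftW_support p hcons.2
    have hPe : P'.edges = p.edges.map (Sym2.map Sum.inl) := liftW_edges p hcons.2
    have hadj1 : (SubdivideEdge G u v).Adj (Sum.inl u) (Sum.inr ()) :=
      sub_adj_lr.mpr (Or.inl rfl)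
    have hadj2 : (SubdivideEdge G u v).Adj (Sum.inr ()) (Sum.inl v) :=
      (sub_adj_lr.mpr (Or.inr rfl)).symm
    set D := Walk.cons hadj1 (Walk.cons hadj2 P') with hD
    have hDs : D.support = Sum.inl u :: Sum.inr () :: p.support.map Sum.inl := by
      simp [hD, hPs]
    have hDe : D.edges = s(Sum.inl u, Sum.inr ()) :: s(Sum.inr (), Sum.inl v) ::
        p.edges.map (Sym2.map Sum.inl) := by
      simp [hD, hPe]
    have hDcyc : D.IsCycle := by
      rw [hD, Walk.cons_isCycle_iff]
      constructor
      · apply Walk.IsPath.cons (liftW_isPath hcons.2 hcons.1)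
        rw [hPs]
        intro hmem
        obtain ⟨z, -, hz⟩ := List.mem_map.mp hmem
        exact nomatch hz
      · rw [Walk.edges_cons]
        intro hmem
        rcases List.mem_cons.mp hmem with h1 | h1
        · rw [Sym2.eq_iff] at h1
          rcases h1 with ⟨h1a, -⟩ | ⟨h1a, -⟩
          · exact nomatch h1a
          · exact huv.ne (Sum.inl.inj h1a)
        · rw [hPe] at h1
          obtain ⟨e', -, he'⟩ := List.mem_map.mp h1
          have : Sum.inr () ∈ Sym2.map (Sum.inl : U → U ⊕ Unit) e' := by rw [he']; simp
          obtain ⟨z, -, hz⟩ := Sym2.mem_map.mp this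
          exact nomatch hz
    apply h _ D hDcyc
    refine ⟨Sym2.map Sum.inl e₀, ⟨sub_edge_of he₀.1 hene, ?_, ?_⟩, ?_⟩
    · rw [hDe]
      intro hmem
      rcases List.mem_cons.mp hmem with h1 | h1
      · have : Sum.inr () ∈ Sym2.map (Sum.inl : U → U ⊕ Unit) e₀ := by rw [h1]; simp
        obtain ⟨z, -, hz⟩ := Sym2.mem_map.mp this
        exact nomatch hz
      rcases List.mem_cons.mp h1 with h1' | h1'
      · have : Sum.inr () ∈ Sym2.map (Sum.inl : U → U ⊕ Unit) e₀ := by rw [h1']; simp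
        obtain ⟨z, -, hz⟩ := Sym2.mem_map.mp this
        exact nomatch hz
      · have h2 : e₀ ∈ p.edges :=
          (List.mem_map_of_injective (Sym2.map.injective Sum.inl_injective)).mp h1'
        exact he₀.2.1 ((hedge e₀).mp (by rw [Walk.edges_cons]; exact List.mem_cons_of_mem _ h2))
    · intro x hx
      obtain ⟨y, hy, rfl⟩ := Sym2.mem_map.mp hx
      have hyc : y ∈ c.support := he₀.2.2 y hy
      have hy2 : y ∈ (Walk.cons h' p).support := (hsupp y).mpr hyc
      rw [Walk.support_cons, List.mem_cons] at hy2
      rw [hDs]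
      rcases hy2 with rfl | hys
      · exact List.mem_cons_self
      · exact List.mem_cons_of_mem _ (List.mem_cons_of_mem _ (List.mem_map_of_mem hys))
    · rintro F ⟨hF1, hF2, hF3⟩
      rcases sub_edge_mem hF1 with ⟨a', b', rfl, hab, habne⟩ | rfl | rfl
      · have hchord : IsChord G c s(a', b') := by
          refine ⟨(G.mem_edgeSet).mpr hab, ?_, ?_⟩
          · intro hmem
            have h2 : s(a', b') ∈ (Walk.cons h' p).edges := (hedge _).mpr hmem
            rw [Walk.edges_cons, List.mem_cons] at h2
            rcases h2 with h1 | h1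
            · exact habne h1
            · apply hF2
              rw [hDe]
              refine List.mem_cons_of_mem _ (List.mem_cons_of_mem _ ?_)
              rw [← Sym2.map_pair_eq]
              exact List.mem_map_of_mem h1
          · intro x hx
            have hxF : (Sum.inl x : U ⊕ Unit) ∈ (s(Sum.inl a', Sum.inl b') : Sym2 (U ⊕ Unit)) := by
              rcases Sym2.mem_iff.mp hx with rfl | rfl
              · exact Sym2.mem_mk_left _ _
              · exact Sym2.mem_mk_right _ _
            have h2 := hF3 _ hxF
            rw [hDs] at h2
            rcases List.mem_cons.mp h2 with h1 | h1
            · have hxu : x = u := Sum.inl.inj h1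
              subst hxu
              exact (hsupp x).mp (by rw [Walk.support_cons]; exact List.mem_cons_self)
            rcases List.mem_cons.mp h1 with h1' | h1'
            · exact nomatch h1'
            · obtain ⟨z, hz, hze⟩ := List.mem_map.mp h1'
              have hxz : z = x := Sum.inl.inj hze
              subst hxz
              exact (hsupp z).mp (by rw [Walk.support_cons]; exact List.mem_cons_of_mem _ hz)
        rw [← huniq _ hchord, Sym2.map_pair_eq]
      · exact absurd (by rw [hDe]; exact List.mem_cons_self) hF2
      · refine absurd ?_ hF2
        rw [hDe]
        exact List.mem_cons_of_mem _ (List.mem_cons.mpr (Or.inl Sym2.eq_swap))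
  · -- the cycle avoids the subdivided edge entirely
    set D := liftW c hin with hD
    apply h _ D (liftW_isCycle hin hc)
    refine ⟨Sym2.map Sum.inl e₀, ⟨sub_edge_of he₀.1 hene, ?_, ?_⟩, ?_⟩
    · rw [hD, liftW_edges]
      intro hmem
      exact he₀.2.1
        ((List.mem_map_of_injective (Sym2.map.injective Sum.inl_injective)).mp hmem)
    · intro x hx
      obtain ⟨y, hy, rfl⟩ := Sym2.mem_map.mp hx
      rw [hD, liftW_support]
      exact List.mem_map_of_mem (he₀.2.2 y hy)
    · rintro F ⟨hF1, hF2, hF3⟩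
      rcases sub_edge_mem hF1 with ⟨a', b', rfl, hab, habne⟩ | rfl | rfl
      · have hchord : IsChord G c s(a', b') := by
          refine ⟨(G.mem_edgeSet).mpr hab, ?_, ?_⟩
          · intro hmem
            apply hF2
            rw [hD, liftW_edges, ← Sym2.map_pair_eq]
            exact List.mem_map_of_mem hmem
          · intro x hx
            have hxF : (Sum.inl x : U ⊕ Unit) ∈ (s(Sum.inl a', Sum.inl b') : Sym2 (U ⊕ Unit)) := by
              rcases Sym2.mem_iff.mp hx with rfl | rfl
              · exact Sym2.mem_mk_left _ _
              · exact Sym2.mem_mk_right _ _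
            have h2 := hF3 _ hxF
            rw [hD, liftW_support] at h2
            obtain ⟨z, hz, hze⟩ := List.mem_map.mp h2
            have hxz : z = x := Sum.inl.inj hze
            subst hxz
            exact hz
        rw [← huniq _ hchord, Sym2.map_pair_eq]
      · have h2 := hF3 (Sum.inr ()) (by simp)
        rw [hD, liftW_support] at h2
        obtain ⟨z, -, hz⟩ := List.mem_map.mp h2
        exact nomatch hz
      · have h2 := hF3 (Sum.inr ()) (by simp)
        rw [hD, liftW_support] at h2
        obtain ⟨z, -, hz⟩ := List.mem_map.mp h2
        exact nomatch hz

lemma two_iso {α β : Type} {A : SimpleGraph α} {B : SimpleGraph β} (e : A ≃g B)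
    (h : TwoConnected B) : TwoConnected A := by
  obtain ⟨hc, hconn⟩ := h
  constructor
  · rwa [Set.ncard_univ, Nat.card_congr e.toEquiv, ← Set.ncard_univ]
  · intro x
    have hcon := hconn (e x)
    rw [connected_iff] at hcon ⊢
    have hmem : ∀ {y : α}, y ≠ x → (e y : β) ∈ ({e x}ᶜ : Set β) := by
      intro y hy
      simp only [Set.mem_compl_iff, Set.mem_singleton_iff]
      exact fun h => hy (e.toEquiv.injective h)
    refine ⟨?_, ?_⟩
    · rintro ⟨a, ha⟩ ⟨b, hb⟩
      have ha' : a ≠ x := by simpa using ha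
      have hb' : b ≠ x := by simpa using hb
      set f : {y : β // y ∈ ({e x}ᶜ : Set β)} → {z : α // z ∈ ({x}ᶜ : Set α)} :=
        fun w => ⟨e.symm w.1, by
          have := w.2
          simp only [Set.mem_compl_iff, Set.mem_singleton_iff] at this ⊢
          intro h
          exact this (by simpa using congrArg (⇑e) h)⟩ with hf
      have hprop : ∀ p q, ((B.induce ({e x}ᶜ : Set β)).Adj p q) →
          f p = f q ∨ (A.induce ({x}ᶜ : Set α)).Adj (f p) (f q) := by
        intro p q hadj
        right
        exact e.symm.map_adj_iff.mpr hadj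
      have key := reach_map f hprop (hcon.1 ⟨e a, hmem ha'⟩ ⟨e b, hmem hb'⟩)
      have h1 : f ⟨e a, hmem ha'⟩ = ⟨a, ha⟩ := Subtype.ext (by simp [hf])
      have h2 : f ⟨e b, hmem hb'⟩ = ⟨b, hb⟩ := Subtype.ext (by simp [hf])
      rwa [h1, h2] at key
    · obtain ⟨⟨y, hy⟩⟩ := hcon.2
      refine ⟨⟨e.symm y, ?_⟩⟩
      simp only [Set.mem_compl_iff, Set.mem_singleton_iff] at hy ⊢
      intro h
      exact hy (by simpa using congrArg (⇑e) h)

lemma uf_iso {α β : Type} {A : SimpleGraph α} {B : SimpleGraph β} (e : A ≃g B)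
    (h : UnichordFree B) : UnichordFree A := by
  rintro a c hc ⟨f₀, hf₀, huniq⟩
  have hinj : Function.Injective (⇑e.toHom) := fun p q hpq => e.toEquiv.injective hpq
  apply h (e a) (c.map e.toHom) (Walk.IsCycle.map hinj hc)
  have hchord : ∀ g₀ : Sym2 α, IsChord A c g₀ → IsChord B (c.map e.toHom) (Sym2.map ⇑e.toHom g₀) := by
    rintro g₀ ⟨hg1, hg2, hg3⟩
    refine ⟨?_, ?_, ?_⟩
    · exact Iso.map_mem_edgeSet_iff e |>.mpr hg1
    · rw [Walk.edges_map]
      intro hmem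
      exact hg2 ((List.mem_map_of_injective (Sym2.map.injective hinj)).mp hmem)
    · intro x hx
      rw [Sym2.mem_map] at hx
      obtain ⟨y, hy, rfl⟩ := hx
      rw [Walk.support_map]
      exact List.mem_map_of_mem (hg3 y hy)
  refine ⟨Sym2.map ⇑e.toHom f₀, hchord f₀ hf₀, ?_⟩
  rintro g ⟨hg1, hg2, hg3⟩
  have hsur : Sym2.map ⇑e.toHom (Sym2.map ⇑e.symm.toHom g) = g := by
    induction g using Sym2.ind with
    | _ x y => simp
  set g₀ := Sym2.map ⇑e.symm.toHom g with hg₀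
  have hchord₀ : IsChord A c g₀ := by
    refine ⟨?_, ?_, ?_⟩
    · rw [← hsur] at hg1
      exact (Iso.map_mem_edgeSet_iff e).mp hg1
    · intro hmem
      exact hg2 (by rw [← hsur, Walk.edges_map]; exact List.mem_map_of_mem hmem)
    · intro y hy
      have : (e y : β) ∈ g := by
        rw [← hsur, Sym2.mem_map]
        exact ⟨y, hy, rfl⟩
      have := hg3 _ this
      rw [Walk.support_map] at this
      obtain ⟨z, hz, hze⟩ := List.mem_map.mp this
      rwa [← e.toEquiv.injective hze]
  rw [← hsur, huniq g₀ hchord₀]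

lemma two_sub (huv : G.Adj u v) (h2 : TwoConnected (SubdivideEdge G u v)) :
    TwoConnected G := by
  classical
  obtain ⟨hcard, hconn⟩ := h2
  have hfinS : Finite (U ⊕ Unit) := by
    by_contra hinf
    rw [not_finite_iff_infinite] at hinf
    rw [Set.Infinite.ncard Set.infinite_univ] at hcard
    omega
  have hfinU : Finite U := Finite.of_injective (Sum.inl : U → U ⊕ Unit) Sum.inl_injective
  have hsum : (Set.univ : Set (U ⊕ Unit)).ncard = (Set.univ : Set U).ncard + 1 := by
    rw [Set.ncard_univ, Set.ncard_univ, Nat.card_sum]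
    simp
  have hcardU : 3 ≤ (Set.univ : Set U).ncard := by
    by_contra hlt
    push_neg at hlt
    have h2' : (Set.univ : Set U).ncard = 2 := by omega
    -- then every vertex is u or v
    have huniv : ∀ a : U, a = u ∨ a = v := by
      intro a
      by_contra hno
      push_neg at hno
      have hsub : ({u, v, a} : Set U) ⊆ Set.univ := Set.subset_univ _
      have h3 : ({u, v, a} : Set U).ncard = 3 :=
        Set.ncard_eq_three.mpr ⟨u, v, a, huv.ne, Ne.symm hno.1, Ne.symm hno.2, rfl⟩
      have := Set.ncard_le_ncard hsub Set.finite_univ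
      omega
    have hcon := hconn (Sum.inr ())
    have hmemu : (Sum.inl u : U ⊕ Unit) ∈ ({Sum.inr ()}ᶜ : Set (U ⊕ Unit)) := by simp
    have hmemv : (Sum.inl v : U ⊕ Unit) ∈ ({Sum.inr ()}ᶜ : Set (U ⊕ Unit)) := by simp
    have hreach := hcon.preconnected ⟨Sum.inl u, hmemu⟩ ⟨Sum.inl v, hmemv⟩
    refine no_adj_not_reachable ?_ ?_ hreach
    · rintro ⟨x, hx⟩ ⟨y, hy⟩ hadj
      have hadj' : (SubdivideEdge G u v).Adj x y := hadj
      match x, y with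
      | Sum.inl a, Sum.inl b =>
        obtain ⟨hab, hne⟩ := sub_adj_ll.mp hadj'
        rcases huniv a with rfl | rfl <;> rcases huniv b with rfl | rfl
        · exact hab.ne rfl
        · exact hne rfl
        · exact hne (Sym2.eq_swap)
        · exact hab.ne rfl
      | Sum.inl a, Sum.inr t => exact hy (by simp)
      | Sum.inr t, Sum.inl a => exact hx (by simp)
      | Sum.inr s, Sum.inr t => exact hx (by simp)
    · intro hh
      rw [Subtype.mk_eq_mk] at hh
      exact huv.ne (Sum.inl.inj hh)
  refine ⟨hcardU, fun x => ?_⟩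
  have hcon := hconn (Sum.inl x)
  rw [connected_iff] at hcon ⊢
  constructor
  · rintro ⟨a, ha⟩ ⟨b, hb⟩
    have ha' : a ≠ x := by simpa using ha
    have hb' : b ≠ x := by simpa using hb
    set f : {y : U ⊕ Unit // y ∈ ({Sum.inl x}ᶜ : Set (U ⊕ Unit))} →
        {z : U // z ∈ ({x}ᶜ : Set U)} := fun w =>
      match w with
      | ⟨Sum.inl a, ha⟩ => ⟨a, by
          simp only [Set.mem_compl_iff, Set.mem_singleton_iff] at ha ⊢
          exact fun h => ha (by rw [h])⟩
      | ⟨Sum.inr _, _⟩ =>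
          if hxu : x = u then ⟨v, by
            simp only [Set.mem_compl_iff, Set.mem_singleton_iff]
            rw [hxu]; exact huv.ne'⟩
          else ⟨u, by
            simp only [Set.mem_compl_iff, Set.mem_singleton_iff]
            exact fun h => hxu h.symm⟩
      with hf
    have hprop : ∀ p q, (((SubdivideEdge G u v).induce ({Sum.inl x}ᶜ : Set (U ⊕ Unit))).Adj p q) →
        f p = f q ∨ (G.induce ({x}ᶜ : Set U)).Adj (f p) (f q) := by
      rintro ⟨p, hp⟩ ⟨q, hq⟩ hadj
      have hadj' : (SubdivideEdge G u v).Adj p q := hadj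
      match p, q with
      | Sum.inl a, Sum.inl b =>
        right
        exact (sub_adj_ll.mp hadj').1
      | Sum.inl a, Sum.inr t =>
        have hax : a ≠ x := by simpa using hp
        rcases sub_adj_lr.mp hadj' with h | h
        · by_cases hxu : x = u
          · exact absurd (h.trans hxu.symm) hax
          · left; simp only [hf]; rw [dif_neg hxu]; exact Subtype.ext h
        · by_cases hxu : x = u
          · left; simp only [hf]; rw [dif_pos hxu]; exact Subtype.ext h
          · right
            simp only [hf]
            rw [dif_neg hxu]
            show G.Adj a u
            rw [h]; exact huv.symm
      | Sum.inr t, Sum.inl a =>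
        have hax : a ≠ x := by simpa using hq
        rcases sub_adj_lr.mp hadj'.symm with h | h
        · by_cases hxu : x = u
          · exact absurd (h.trans hxu.symm) hax
          · left; simp only [hf]; rw [dif_neg hxu]; exact Subtype.ext h.symm
        · by_cases hxu : x = u
          · left; simp only [hf]; rw [dif_pos hxu]; exact Subtype.ext h.symm
          · right
            simp only [hf]
            rw [dif_neg hxu]
            show G.Adj u a
            rw [h]; exact huv
      | Sum.inr s, Sum.inr t => exact absurd hadj' sub_adj_rr
    have key := reach_map f hprop
      (hcon.1 ⟨Sum.inl a, by simpa using ha'⟩ ⟨Sum.inl b, by simpa using hb'⟩)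
    exact key
  · obtain ⟨y, -, hy⟩ := Set.exists_ne_of_one_lt_ncard (s := (Set.univ : Set U)) (by omega) x
    exact ⟨⟨y, by simpa using hy⟩⟩

lemma subdiv_key : ∀ {W U : Type} {H : SimpleGraph W} {G : SimpleGraph U},
    IsSubdivisionOf H G → TwoConnected G → UnichordFree G →
    TwoConnected H ∧ UnichordFree H := by
  intro W U H G hsub
  induction hsub with
  | refl G e =>
    exact fun h2 hu => ⟨two_iso e.symm h2, uf_iso e.symm hu⟩
  | step G u v hadj hdeg hsub G₂ hiso ih =>
    intro h2 hu
    have h2' := two_iso hiso.symm h2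
    have hu' := uf_iso hiso.symm hu
    exact ih (two_sub hadj h2') (uf_sub hadj hdeg hu')

end AuxiliaryLemmas

/-- If `G` is 2-connected, not a cycle and unichord-free, then its reduced graph
is 2-connected and unichord-free. -/
theorem stmt8 {U W : Type} [Fintype U] [Fintype W] (G : SimpleGraph U) (G' : SimpleGraph W)
    (h2c : TwoConnected G) (hnc : ¬ IsCycleGraph G) (huf : UnichordFree G)
    (hred : IsReducedGraphOf G' G) :
    TwoConnected G' ∧ UnichordFree G' := by
  obtain ⟨-, hsub⟩ := hred
  exact subdiv_key hsub h2c huf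
end

section
/- If G is a {square,unichord}-free graph, u_{ab} is the vertex obtained by contracting two vertices a, b that each have exactly one neighbour (a' and b' respectively, with a' ≠ b') outside a proper 2-cutset side, and no vertex of Y is adjacent to both a' and b', then the contracted graph G_Y is {square,unichord}-free. -/
open SimpleGraph

/-- The graph `G_Y` obtained from `G[Y ∪ {a,b}]` by identifying `a` and `b`
into the single vertex `u_{ab} = Sum.inr ()`, adjacent to `a'` and `b'`. -/
def ContractedGY {V : Type} (G : SimpleGraph V) (Y : Set V) (a' b' : V) :
    SimpleGraph (↥Y ⊕ Unit) :=
  SimpleGraph.fromRel (fun x y => match x, y with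
    | Sum.inl u, Sum.inl v => G.Adj u v
    | Sum.inl u, Sum.inr _ => (u : V) = a' ∨ (u : V) = b'
    | Sum.inr _, Sum.inl _ => False
    | Sum.inr _, Sum.inr _ => False)

namespace Stmt19Aux

open SimpleGraph

variable {V : Type} {G : SimpleGraph V} {Y : Set V}

def cf (j : V) : ↥Y ⊕ Unit → V := Sum.elim Subtype.val (fun _ => j)

@[simp] lemma cf_inl (j : V) (u : ↥Y) : cf j (Sum.inl u : ↥Y ⊕ Unit) = (u : V) := rfl

lemma eq_inl_of_ne_inr (z : ↥Y ⊕ Unit) (h : z ≠ Sum.inr ()) : ∃ u : ↥Y, z = Sum.inl u := by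
  rcases z with u | u
  · exact ⟨u, rfl⟩
  · cases u; exact absurd rfl h

lemma cgy_adj_inl_inl {a' b' : V} (u v : ↥Y) :
    (ContractedGY G Y a' b').Adj (Sum.inl u) (Sum.inl v) ↔ G.Adj u v := by
  simp only [ContractedGY, fromRel_adj]
  constructor
  · rintro ⟨-, h | h⟩
    · exact h
    · exact h.symm
  · intro h
    exact ⟨by simp [Subtype.ext_iff, h.ne], Or.inl h⟩

lemma cgy_adj_inr_inl {a' b' : V} (u : ↥Y) :
    (ContractedGY G Y a' b').Adj (Sum.inr ()) (Sum.inl u) ↔ ((u : V) = a' ∨ (u : V) = b') := by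
  simp only [ContractedGY, fromRel_adj]
  constructor
  · rintro ⟨-, h | h⟩
    · exact h.elim
    · exact h
  · intro h
    exact ⟨by simp, Or.inr h⟩

/-- a shortcut: if an edge joins two support vertices but is not an edge of the walk,
there is a strictly shorter walk with support inside the old one. -/
lemma shortcut {c b : V} (r : G.Walk c b) :
    ∀ {u v : V}, u ∈ r.support → v ∈ r.support → G.Adj u v → s(u, v) ∉ r.edges →
      ∃ w : G.Walk c b, w.length < r.length ∧ ∀ z ∈ w.support, z ∈ r.support := by
  induction r with
  | nil =>
      intro u v hu hv hadj _
      simp only [SimpleGraph.Walk.support_nil, List.mem_singleton] at hu hv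
      subst hu; subst hv
      exact absurd hadj (G.irrefl)
  | @cons c m b h r' ih =>
      intro u v hu hv hadj hne
      classical
      by_cases hu0 : u = c
      · by_cases hv0 : v = c
        · subst hu0; subst hv0; exact absurd hadj (G.irrefl)
        · -- u = c, v ∈ r'.support
          subst hu0
          have hv' : v ∈ r'.support := by
            simp only [SimpleGraph.Walk.support_cons, List.mem_cons] at hv
            exact hv.resolve_left hv0
          refine ⟨Walk.cons hadj (r'.dropUntil v hv'), ?_, ?_⟩
          · have hsplit : r'.length = (r'.takeUntil v hv').length + (r'.dropUntil v hv').length := by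
              conv_lhs => rw [← r'.take_spec hv']
              rw [Walk.length_append]
            have htake : 1 ≤ (r'.takeUntil v hv').length := by
              by_contra hlt
              push_neg at hlt
              interval_cases hh : (r'.takeUntil v hv').length
              · have : m = v := Walk.eq_of_length_eq_zero hh
                subst this
                exact hne (by simp [Walk.edges_cons])
            simp only [Walk.length_cons]
            omega
          · intro z hz
            simp only [Walk.support_cons, List.mem_cons] at hz ⊢
            rcases hz with rfl | hz
            · exact Or.inl rfl
            · exact Or.inr (Walk.support_dropUntil_subset _ hv' hz)
      · by_cases hv0 : v = c
        · subst hv0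
          have hu' : u ∈ r'.support := by
            simp only [SimpleGraph.Walk.support_cons, List.mem_cons] at hu
            exact hu.resolve_left hu0
          refine ⟨Walk.cons hadj.symm (r'.dropUntil u hu'), ?_, ?_⟩
          · have hsplit : r'.length = (r'.takeUntil u hu').length + (r'.dropUntil u hu').length := by
              conv_lhs => rw [← r'.take_spec hu']
              rw [Walk.length_append]
            have htake : 1 ≤ (r'.takeUntil u hu').length := by
              by_contra hlt
              push_neg at hlt
              interval_cases hh : (r'.takeUntil u hu').length
              · have hmu : m = u := Walk.eq_of_length_eq_zero hh
                apply hne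
                rw [← hmu]
                simp [Walk.edges_cons, Sym2.eq_swap]
            simp only [Walk.length_cons]
            omega
          · intro z hz
            simp only [Walk.support_cons, List.mem_cons] at hz ⊢
            rcases hz with rfl | hz
            · exact Or.inl rfl
            · exact Or.inr (Walk.support_dropUntil_subset _ hu' hz)
        · have hu' : u ∈ r'.support := by
            simp only [SimpleGraph.Walk.support_cons, List.mem_cons] at hu
            exact hu.resolve_left hu0
          have hv' : v ∈ r'.support := by
            simp only [SimpleGraph.Walk.support_cons, List.mem_cons] at hv
            exact hv.resolve_left hv0
          have hne' : s(u, v) ∉ r'.edges := fun hh => hne (by simp [Walk.edges_cons, hh])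
          obtain ⟨w, hw1, hw2⟩ := ih hu' hv' hadj hne'
          refine ⟨Walk.cons h w, by simp [Walk.length_cons]; omega, ?_⟩
          intro z hz
          simp only [Walk.support_cons, List.mem_cons] at hz ⊢
          rcases hz with rfl | hz
          · exact Or.inl rfl
          · exact Or.inr (hw2 z hz)

lemma exists_induced_path {a b : V} (S : Set V)
    (h : ∃ w : G.Walk a b, ∀ z ∈ w.support, z ∈ S) :
    ∃ r : G.Walk a b, r.IsPath ∧ (∀ z ∈ r.support, z ∈ S) ∧
      ∀ u v, u ∈ r.support → v ∈ r.support → G.Adj u v → s(u, v) ∈ r.edges := by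
  classical
  obtain ⟨w, hw⟩ := h
  have hP : ∃ n, ∃ w : G.Walk a b, (∀ z ∈ w.support, z ∈ S) ∧ w.length = n :=
    ⟨w.length, w, hw, rfl⟩
  set n := Nat.find hP with hn
  obtain ⟨w₀, hw₀S, hw₀len⟩ := Nat.find_spec hP
  refine ⟨w₀.bypass, w₀.bypass_isPath, ?_, ?_⟩
  · intro z hz
    exact hw₀S z (w₀.support_bypass_subset hz)
  · have hlen : w₀.bypass.length = n := by
      have h1 : w₀.bypass.length ≤ n := by
        have := w₀.length_bypass_le
        omega
      have h2 : n ≤ w₀.bypass.length :=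
        Nat.find_min' hP ⟨w₀.bypass, fun z hz => hw₀S z (w₀.support_bypass_subset hz), rfl⟩
      omega
    intro u v hu hv hadj
    by_contra hne
    obtain ⟨w₁, hw₁len, hw₁S⟩ := shortcut w₀.bypass hu hv hadj hne
    have : ¬ (∃ w : G.Walk a b, (∀ z ∈ w.support, z ∈ S) ∧ w.length = w₁.length) :=
      Nat.find_min hP (by omega)
    exact this ⟨w₁, fun z hz => hw₀S z (w₀.support_bypass_subset (hw₁S z hz)), rfl⟩


lemma liftW (GY : SimpleGraph (↥Y ⊕ Unit))
    (hadj1 : ∀ u v : ↥Y, GY.Adj (Sum.inl u) (Sum.inl v) ↔ G.Adj u v) (j : V) :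
    ∀ {s t : ↥Y ⊕ Unit} (q : GY.Walk s t), Sum.inr () ∉ q.support →
      ∀ (x y : ↥Y), s = Sum.inl x → t = Sum.inl y →
      ∃ p : G.Walk x y, p.support = q.support.map (cf j) ∧
        p.edges = q.edges.map (Sym2.map (cf j)) := by
  intro s t q
  induction q with
  | nil =>
      intro _ x y hx hy
      subst hx
      have : x = y := by injection hy
      subst this
      exact ⟨Walk.nil, by simp, by simp⟩
  | @cons s m t h q ih =>
      intro hinr x y hx hy
      subst hx
      have hm : m ≠ Sum.inr () := by
        intro hme
        apply hinr
        rw [Walk.support_cons]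
        exact List.mem_cons_of_mem _ (hme ▸ q.start_mem_support)
      obtain ⟨x', rfl⟩ := eq_inl_of_ne_inr m hm
      have hinr' : Sum.inr () ∉ q.support := fun hh => hinr (by
        rw [Walk.support_cons]; exact List.mem_cons_of_mem _ hh)
      obtain ⟨p, hps, hpe⟩ := ih hinr' x' y rfl hy
      refine ⟨Walk.cons ((hadj1 x x').mp h) p, ?_, ?_⟩
      · simp [Walk.support_cons, hps]
      · simp [Walk.edges_cons, hpe]

lemma sym2_map_inj_on_inl (j : V) (e₁ e₂ : Sym2 (↥Y ⊕ Unit))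
    (h₁ : ∀ z ∈ e₁, z ≠ Sum.inr ()) (h₂ : ∀ z ∈ e₂, z ≠ Sum.inr ())
    (h : Sym2.map (cf j) e₁ = Sym2.map (cf j) e₂) : e₁ = e₂ := by
  induction e₁ using Sym2.ind with
  | _ z w =>
    induction e₂ using Sym2.ind with
    | _ z' w' =>
      obtain ⟨zz, rfl⟩ := eq_inl_of_ne_inr z (h₁ z (by simp))
      obtain ⟨ww, rfl⟩ := eq_inl_of_ne_inr w (h₁ w (by simp))
      obtain ⟨zz', rfl⟩ := eq_inl_of_ne_inr z' (h₂ z' (by simp))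
      obtain ⟨ww', rfl⟩ := eq_inl_of_ne_inr w' (h₂ w' (by simp))
      simp only [Sym2.map_pair_eq, cf_inl, Sym2.eq_iff] at h ⊢
      rcases h with ⟨h1, h2⟩ | ⟨h1, h2⟩
      · exact Or.inl ⟨congrArg Sum.inl (Subtype.ext h1), congrArg Sum.inl (Subtype.ext h2)⟩
      · exact Or.inr ⟨congrArg Sum.inl (Subtype.ext h1), congrArg Sum.inl (Subtype.ext h2)⟩

lemma list_tail_map {α β : Type*} (f : α → β) (l : List α) :
    (l.map f).tail = l.tail.map f := by
  cases l <;> simp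

lemma nodup_map_cf (j : V) (l : List (↥Y ⊕ Unit)) (hl : l.Nodup)
    (h : ∀ z ∈ l, z ≠ Sum.inr ()) : (l.map (cf j)).Nodup := by
  refine hl.map_on ?_
  intro x hx y hy hxy
  obtain ⟨u, rfl⟩ := eq_inl_of_ne_inr x (h x hx)
  obtain ⟨w, rfl⟩ := eq_inl_of_ne_inr y (h y hy)
  exact congrArg Sum.inl (Subtype.ext hxy)

lemma edge_vertex_mem {W : Type} {H : SimpleGraph W} {u v : W} (q : H.Walk u v)
    (e : Sym2 W) (he : e ∈ q.edges) : ∀ z ∈ e, z ∈ q.support := by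
  induction e using Sym2.ind with
  | _ x y =>
    intro z hz
    rw [Sym2.mem_iff] at hz
    rcases hz with rfl | rfl
    · exact q.fst_mem_support_of_mem_edges he
    · exact q.snd_mem_support_of_mem_edges he

lemma case1core (huf : UnichordFree G) (GY : SimpleGraph (↥Y ⊕ Unit))
    (hadj1 : ∀ u v : ↥Y, GY.Adj (Sum.inl u) (Sum.inl v) ↔ G.Adj u v)
    (v : ↥Y) (c : GY.Walk (Sum.inl v) (Sum.inl v)) (hc : c.IsCycle)
    (hinr : Sum.inr () ∉ c.support) (hchord : ∃! e, IsChord GY c e) : False := by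
  classical
  set j : V := (v : V) with hj
  obtain ⟨p, hps, hpe⟩ := liftW GY hadj1 j c hinr v v rfl rfl
  have hsupne : ∀ z ∈ c.support, z ≠ Sum.inr () := fun z hz hzz => hinr (hzz ▸ hz)
  have hedgene : ∀ e ∈ c.edges, ∀ z ∈ e, z ≠ Sum.inr () :=
    fun e he z hz => hsupne z (edge_vertex_mem c e he z hz)
  -- p is a cycle
  have hpc : p.IsCycle := by
    refine ⟨⟨⟨?_⟩, ?_⟩, ?_⟩
    · rw [hpe]
      refine hc.isTrail.edges_nodup.map_on ?_
      intro e₁ h₁ e₂ h₂ hmap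
      exact sym2_map_inj_on_inl j e₁ e₂ (hedgene e₁ h₁) (hedgene e₂ h₂) hmap
    · intro hnil
      apply hc.ne_nil
      have : p.edges = [] := by rw [hnil]; rfl
      rw [hpe] at this
      have hce : c.edges = [] := List.map_eq_nil_iff.mp this
      have : c.length = 0 := by
        have := c.length_edges
        rw [hce] at this
        simpa using this.symm
      exact Walk.Nil.eq_nil (Walk.nil_iff_length_eq.mpr this)
    · have : p.support.tail = c.support.tail.map (cf j) := by
        rw [hps, list_tail_map]
      rw [this]
      exact nodup_map_cf j _ hc.support_nodup
        (fun z hz => hsupne z (List.mem_of_mem_tail hz))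
  -- transfer the chord
  obtain ⟨e, he, hu⟩ := hchord
  revert he hu
  induction e using Sym2.ind with
  | _ z w =>
    intro he hu
    obtain ⟨hes, hene, hesup⟩ := he
    obtain ⟨zz, rfl⟩ := eq_inl_of_ne_inr z (hsupne z (hesup z (by simp)))
    obtain ⟨ww, rfl⟩ := eq_inl_of_ne_inr w (hsupne w (hesup w (by simp)))
    have hmape : Sym2.map (cf j) s(Sum.inl zz, Sum.inl ww) = s((zz : V), (ww : V)) := by
      simp [Sym2.map_pair_eq]
    have hchordp : IsChord G p s((zz : V), (ww : V)) := by
      refine ⟨(hadj1 zz ww).mp hes, ?_, ?_⟩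
      · rw [hpe]
        intro hmem
        obtain ⟨g, hg, hgmap⟩ := List.mem_map.mp hmem
        have : g = s(Sum.inl zz, Sum.inl ww) :=
          sym2_map_inj_on_inl j _ _ (hedgene g hg)
            (fun z hz => by
              rw [Sym2.mem_iff] at hz
              rcases hz with rfl | rfl <;> simp) (by rw [hgmap, hmape])
        exact hene (this ▸ hg)
      · intro x hx
        rw [Sym2.mem_iff] at hx
        rw [hps]
        rcases hx with rfl | rfl
        · exact List.mem_map.mpr ⟨Sum.inl zz, hesup _ (by simp), rfl⟩
        · exact List.mem_map.mpr ⟨Sum.inl ww, hesup _ (by simp), rfl⟩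
    refine huf (v : V) p hpc ⟨s((zz : V), (ww : V)), hchordp, ?_⟩
    intro g hg
    revert hg
    induction g using Sym2.ind with
    | _ s t =>
      intro hg
      obtain ⟨hgs, hgne, hgsup⟩ := hg
      have hsmem : s ∈ p.support := hgsup s (by simp)
      have htmem : t ∈ p.support := hgsup t (by simp)
      rw [hps] at hsmem htmem
      obtain ⟨zs, hzs, rfl⟩ := List.mem_map.mp hsmem
      obtain ⟨zt, hzt, rfl⟩ := List.mem_map.mp htmem
      obtain ⟨us, rfl⟩ := eq_inl_of_ne_inr zs (hsupne zs hzs)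
      obtain ⟨ut, rfl⟩ := eq_inl_of_ne_inr zt (hsupne zt hzt)
      have hchordc : IsChord GY c s(Sum.inl us, Sum.inl ut) := by
        refine ⟨(hadj1 us ut).mpr hgs, ?_, ?_⟩
        · intro hmem
          apply hgne
          rw [hpe]
          refine List.mem_map.mpr ⟨_, hmem, ?_⟩
          simp [Sym2.map_pair_eq]
        · intro x hx
          rw [Sym2.mem_iff] at hx
          rcases hx with rfl | rfl
          · exact hzs
          · exact hzt
      have heq := hu _ hchordc
      have : s(cf j (Sum.inl us), cf j (Sum.inl ut)) =
          Sym2.map (cf j) s(Sum.inl us, Sum.inl ut) := by simp [Sym2.map_pair_eq]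
      rw [this, heq, hmape]


lemma case2core (huf : UnichordFree G) (X : Set V) (a b : V)
    (hdisj : Disjoint X Y) (haY : a ∉ Y) (hbY : b ∉ Y) (hab : a ≠ b)
    (hsep : ∀ x ∈ X, ∀ y ∈ Y, ¬ G.Adj x y)
    (A B : V)
    (hA : G.neighborSet a ∩ Y = {A}) (hB : G.neighborSet b ∩ Y = {B})
    (r : G.Walk a b) (hrp : r.IsPath) (hrS : ∀ v ∈ r.support, v ∈ X ∪ {a, b})
    (hrind : ∀ u v, u ∈ r.support → v ∈ r.support → G.Adj u v → s(u, v) ∈ r.edges)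
    (GY : SimpleGraph (↥Y ⊕ Unit))
    (hadj1 : ∀ u v : ↥Y, GY.Adj (Sum.inl u) (Sum.inl v) ↔ G.Adj u v)
    (hadj2 : ∀ u : ↥Y, GY.Adj (Sum.inr ()) (Sum.inl u) ↔ ((u : V) = A ∨ (u : V) = B))
    (x y : ↥Y) (hx : (x : V) = A) (hy : (y : V) = B)
    (q : GY.Walk (Sum.inl x) (Sum.inl y))
    (h₁ : GY.Adj (Sum.inr ()) (Sum.inl x)) (h₂ : GY.Adj (Sum.inl y) (Sum.inr ()))
    (hc : (Walk.cons h₁ (q.concat h₂)).IsCycle)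
    (hchord : ∃! e, IsChord GY (Walk.cons h₁ (q.concat h₂)) e) : False := by
  classical
  subst hx
  subst hy
  set c : GY.Walk (Sum.inr ()) (Sum.inr ()) := Walk.cons h₁ (q.concat h₂) with hcdef
  have hcsup : c.support = Sum.inr () :: (q.support ++ [Sum.inr ()]) := by
    simp [hcdef, Walk.support_cons, Walk.support_concat]
  have hcedges : c.edges =
      s(Sum.inr (), Sum.inl x) :: (q.edges ++ [s(Sum.inl y, Sum.inr ())]) := by
    simp [hcdef, Walk.edges_cons, Walk.edges_concat]
  -- q's support is clean
  have htail : (q.support ++ [Sum.inr ()]).Nodup := by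
    have h := hc.support_nodup
    rw [show c.support.tail = q.support ++ [Sum.inr ()] by rw [hcsup]; rfl] at h
    exact h
  have hqnodup : q.support.Nodup := (List.nodup_append.mp htail).1
  have hqinr : Sum.inr () ∉ q.support := by
    intro hmem
    have := (List.nodup_append'.mp htail).2.2
    exact this hmem (by simp)
  have hsupne : ∀ z ∈ q.support, z ≠ Sum.inr () := fun z hz hzz => hqinr (hzz ▸ hz)
  have hedgene : ∀ e ∈ q.edges, ∀ z ∈ e, z ≠ Sum.inr () :=
    fun e he z hz => hsupne z (edge_vertex_mem q e he z hz)
  -- x ≠ y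
  have hxy : x ≠ y := by
    rintro rfl
    have h := hc.isTrail.edges_nodup
    rw [hcedges] at h
    have := (List.nodup_cons.mp h).1
    exact this (by rw [Sym2.eq_swap]; simp)
  -- lift q to a walk in G
  obtain ⟨p₀, hps, hpe⟩ := liftW GY hadj1 a q hqinr x y rfl rfl
  -- basic adjacencies in G
  have hadjaA : G.Adj a (x : V) := by
    have : (x : V) ∈ ({(x : V)} : Set V) := rfl
    rw [← hA] at this
    exact this.1
  have hadjbB : G.Adj b (y : V) := by
    have : (y : V) ∈ ({(y : V)} : Set V) := rfl
    rw [← hB] at this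
    exact this.1
  have huniqA : ∀ u, u ∈ Y → G.Adj a u → u = (x : V) := by
    intro u hu hadj
    have : u ∈ G.neighborSet a ∩ Y := ⟨hadj, hu⟩
    rw [hA] at this
    exact this
  have huniqB : ∀ u, u ∈ Y → G.Adj b u → u = (y : V) := by
    intro u hu hadj
    have : u ∈ G.neighborSet b ∩ Y := ⟨hadj, hu⟩
    rw [hB] at this
    exact this
  -- the cycle in G
  set W : G.Walk a a := Walk.cons hadjaA (p₀.append (Walk.cons hadjbB.symm r.reverse))
    with hWdef
  have hWsup : W.support = a :: (p₀.support ++ r.reverse.support) := by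
    simp [hWdef, Walk.support_cons, Walk.support_append]
  have hWedges : W.edges =
      s(a, (x : V)) :: (p₀.edges ++ (s((y : V), b) :: r.reverse.edges)) := by
    simp [hWdef, Walk.edges_cons, Walk.edges_append]
  have hp₀sub : ∀ z ∈ p₀.support, z ∈ Y := by
    intro z hz
    rw [hps] at hz
    obtain ⟨w, hw, rfl⟩ := List.mem_map.mp hz
    obtain ⟨u, rfl⟩ := eq_inl_of_ne_inr w (hsupne w hw)
    exact u.2
  have hrrev : ∀ z ∈ r.reverse.support, z ∈ X ∪ {a, b} := by
    intro z hz
    rw [Walk.support_reverse, List.mem_reverse] at hz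
    exact hrS z hz
  have hYdisj : ∀ z, z ∈ Y → z ∈ X ∪ {a, b} → False := by
    intro z hzY hzX
    rcases hzX with hzX | hz
    · exact (Set.disjoint_left.mp hdisj) hzX hzY
    · rcases hz with rfl | rfl
      · exact haY hzY
      · exact hbY hzY
  have hmemY_edge : ∀ e ∈ p₀.edges, ∀ z ∈ e, z ∈ Y :=
    fun e he z hz => hp₀sub z (edge_vertex_mem p₀ e he z hz)
  have hmemX_edge : ∀ e ∈ r.reverse.edges, ∀ z ∈ e, z ∈ X ∪ {a, b} :=
    fun e he z hz => hrrev z (edge_vertex_mem r.reverse e he z hz)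
  have hp₀nodup : p₀.support.Nodup := by
    rw [hps]; exact nodup_map_cf a _ hqnodup hsupne
  have hp₀enodup : p₀.edges.Nodup := by
    rw [hpe]
    have hq : q.edges.Nodup := by
      have h := hc.isTrail.edges_nodup
      rw [hcedges] at h
      exact (List.nodup_append.mp (List.nodup_cons.mp h).2).1
    refine hq.map_on ?_
    intro e₁ he₁ e₂ he₂ hmap
    exact sym2_map_inj_on_inl a e₁ e₂ (hedgene e₁ he₁) (hedgene e₂ he₂) hmap
  have haA_not_p₀ : s(a, (x : V)) ∉ p₀.edges :=
    fun h => haY (hmemY_edge _ h a (by simp))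
  have hBb_not_p₀ : s((y : V), b) ∉ p₀.edges :=
    fun h => hbY (hmemY_edge _ h b (by simp))
  have haA_ne_Bb : s(a, (x : V)) ≠ s((y : V), b) := by
    intro h
    rw [Sym2.eq_iff] at h
    rcases h with ⟨h1, -⟩ | ⟨h1, -⟩
    · exact haY (h1 ▸ y.2)
    · exact hab h1
  have haA_not_r : s(a, (x : V)) ∉ r.reverse.edges :=
    fun h => hYdisj (x : V) x.2 (hmemX_edge _ h _ (by simp))
  have hBb_not_r : s((y : V), b) ∉ r.reverse.edges :=
    fun h => hYdisj (y : V) y.2 (hmemX_edge _ h _ (by simp))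
  have hp₀_disj_r : ∀ e ∈ p₀.edges, e ∉ r.reverse.edges := by
    intro e he hre
    exact hYdisj e.out.1 (hmemY_edge e he _ (Sym2.out_fst_mem e))
      (hmemX_edge e hre _ (Sym2.out_fst_mem e))
  have hrrev_nodup : r.reverse.support.Nodup := hrp.reverse.support_nodup
  have hrrev_enodup : r.reverse.edges.Nodup := hrp.reverse.isTrail.edges_nodup
  have hWcyc : W.IsCycle := by
    refine ⟨⟨⟨?_⟩, by simp [hWdef]⟩, ?_⟩
    · rw [hWedges]
      refine List.nodup_cons.mpr ⟨?_, ?_⟩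
      · intro hmem
        rcases List.mem_append.mp hmem with h | h
        · exact haA_not_p₀ h
        · rcases List.mem_cons.mp h with h | h
          · exact haA_ne_Bb h
          · exact haA_not_r h
      · refine List.Nodup.append hp₀enodup (List.nodup_cons.mpr ⟨hBb_not_r, hrrev_enodup⟩) ?_
        intro e he hmem
        rcases List.mem_cons.mp hmem with rfl | h
        · exact hBb_not_p₀ he
        · exact hp₀_disj_r e he h
    · rw [show W.support.tail = p₀.support ++ r.reverse.support by rw [hWsup]; rfl]
      refine List.Nodup.append hp₀nodup hrrev_nodup ?_
      intro z hz hz'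
      exact hYdisj z (hp₀sub z hz) (hrrev z hz')
  -- chord analysis
  obtain ⟨e, he, hu⟩ := hchord
  -- the chord does not touch the contracted vertex
  have he_noninr : ∀ z ∈ e, z ≠ Sum.inr () := by
    intro z hz hzz
    subst hzz
    obtain ⟨hes, hene, hesup⟩ := he
    obtain ⟨z', hz'⟩ := Sym2.mem_iff_exists.mp hz
    rw [hz'] at hes hene
    have hadj : GY.Adj (Sum.inr ()) z' := hes
    have hz'ne : z' ≠ Sum.inr () := fun hh => (hh ▸ hadj).ne rfl
    obtain ⟨u, rfl⟩ := eq_inl_of_ne_inr z' hz'ne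
    rcases (hadj2 u).mp hadj with h | h
    · have : u = x := Subtype.ext h
      subst this
      exact hene (by rw [hcedges]; simp)
    · have : u = y := Subtype.ext h
      subst this
      apply hene
      rw [hcedges, Sym2.eq_swap]
      simp
  revert he_noninr he hu
  induction e using Sym2.ind with
  | _ z w =>
    intro he hu he_noninr
    obtain ⟨hes, hene, hesup⟩ := he
    obtain ⟨zz, rfl⟩ := eq_inl_of_ne_inr z (he_noninr z (by simp))
    obtain ⟨ww, rfl⟩ := eq_inl_of_ne_inr w (he_noninr w (by simp))
    have hsup_q : ∀ (u : ↥Y), Sum.inl u ∈ c.support → Sum.inl u ∈ q.support := by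
      intro u hu'
      rw [hcsup] at hu'
      rcases List.mem_cons.mp hu' with h | h
      · exact absurd h (by simp)
      · rcases List.mem_append.mp h with h | h
        · exact h
        · exact absurd (List.mem_singleton.mp h) (by simp)
    have hzzq : Sum.inl zz ∈ q.support := hsup_q zz (hesup _ (by simp))
    have hwwq : Sum.inl ww ∈ q.support := hsup_q ww (hesup _ (by simp))
    have hmape : Sym2.map (cf a) s(Sum.inl zz, Sum.inl ww) = s((zz : V), (ww : V)) := by
      simp [Sym2.map_pair_eq]
    have hzzp : (zz : V) ∈ p₀.support := by
      rw [hps]; exact List.mem_map.mpr ⟨Sum.inl zz, hzzq, rfl⟩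
    have hwwp : (ww : V) ∈ p₀.support := by
      rw [hps]; exact List.mem_map.mpr ⟨Sum.inl ww, hwwq, rfl⟩
    -- mapped edges of q are in p₀
    have hqmap : ∀ g ∈ q.edges, Sym2.map (cf a) g ∈ p₀.edges := by
      intro g hg
      rw [hpe]; exact List.mem_map.mpr ⟨g, hg, rfl⟩
    -- a mixed edge is always an edge of W
    have hmixed : ∀ s t, s ∈ p₀.support → t ∈ r.support → G.Adj s t → s(s, t) ∈ W.edges := by
      intro s t hsp htr hadj
      have hsY : s ∈ Y := hp₀sub s hsp
      rcases hrS t htr with htX | ht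
      · exact absurd hadj.symm (hsep t htX s hsY)
      · rcases ht with rfl | rfl
        · have : s = (x : V) := huniqA s hsY hadj.symm
          subst this
          rw [hWedges, Sym2.eq_swap]
          simp
        · have : s = (y : V) := huniqB s hsY hadj.symm
          subst this
          rw [hWedges]
          simp
    -- membership in W's support splits
    have hWsplit : ∀ z', z' ∈ W.support → z' ∈ p₀.support ∨ z' ∈ r.support := by
      intro z' hz'
      rw [hWsup] at hz'
      rcases List.mem_cons.mp hz' with rfl | hz'
      · exact Or.inr r.start_mem_support
      · rcases List.mem_append.mp hz' with h | h
        · exact Or.inl h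
        · right; rw [Walk.support_reverse, List.mem_reverse] at h; exact h
    -- the lifted chord
    have hchordW : IsChord G W s((zz : V), (ww : V)) := by
      refine ⟨(hadj1 zz ww).mp hes, ?_, ?_⟩
      · rw [hWedges]
        intro hmem
        rcases List.mem_cons.mp hmem with h | h
        · rw [Sym2.eq_iff] at h
          rcases h with ⟨h1, -⟩ | ⟨-, h2⟩
          · exact haY (h1 ▸ zz.2)
          · exact haY (h2.symm ▸ ww.2)
        · rcases List.mem_append.mp h with h | h
          · rw [hpe] at h
            obtain ⟨g, hg, hgmap⟩ := List.mem_map.mp h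
            have : g = s(Sum.inl zz, Sum.inl ww) :=
              sym2_map_inj_on_inl a _ _ (hedgene g hg)
                (fun z hz => by
                  rw [Sym2.mem_iff] at hz
                  rcases hz with rfl | rfl <;> simp) (by rw [hgmap, hmape])
            subst this
            exact hene (by rw [hcedges]; simp [hg])
          · rcases List.mem_cons.mp h with h | h
            · rw [Sym2.eq_iff] at h
              rcases h with ⟨-, h2⟩ | ⟨h1, -⟩
              · exact hbY (h2 ▸ ww.2)
              · exact hbY (h1 ▸ zz.2)
            · exact hYdisj (zz : V) zz.2 (hmemX_edge _ h _ (by simp))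
      · intro x' hx'
        rw [Sym2.mem_iff] at hx'
        rw [hWsup]
        rcases hx' with rfl | rfl
        · exact List.mem_cons_of_mem _ (List.mem_append.mpr (Or.inl hzzp))
        · exact List.mem_cons_of_mem _ (List.mem_append.mpr (Or.inl hwwp))
    refine huf a W hWcyc ⟨s((zz : V), (ww : V)), hchordW, ?_⟩
    intro g hg
    revert hg
    induction g using Sym2.ind with
    | _ s t =>
      intro hg
      obtain ⟨hgs, hgne, hgsup⟩ := hg
      have hadjst : G.Adj s t := hgs
      rcases hWsplit s (hgsup s (by simp)) with hsp | hsr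
      · rcases hWsplit t (hgsup t (by simp)) with htp | htr
        · -- both ends in Y: pull back to a chord of c
          rw [hps] at hsp htp
          obtain ⟨zs, hzs, hzse⟩ := List.mem_map.mp hsp
          obtain ⟨zt, hzt, hzte⟩ := List.mem_map.mp htp
          obtain ⟨us, rfl⟩ := eq_inl_of_ne_inr zs (hsupne zs hzs)
          obtain ⟨ut, rfl⟩ := eq_inl_of_ne_inr zt (hsupne zt hzt)
          simp only [cf_inl] at hzse hzte
          subst hzse
          subst hzte
          have hchordc : IsChord GY c s(Sum.inl us, Sum.inl ut) := by
            refine ⟨(hadj1 us ut).mpr hadjst, ?_, ?_⟩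
            · rw [hcedges]
              intro hmem
              rcases List.mem_cons.mp hmem with h | h
              · exact absurd h (by simp [Sym2.eq_iff])
              · rcases List.mem_append.mp h with h | h
                · apply hgne
                  rw [hWedges]
                  have := hqmap _ h
                  rw [show Sym2.map (cf a) s(Sum.inl us, Sum.inl ut)
                      = s((us : V), (ut : V)) by simp [Sym2.map_pair_eq]] at this
                  simp [this]
                · rw [List.mem_singleton] at h
                  exact absurd h (by simp [Sym2.eq_iff])
            · intro x' hx'
              rw [Sym2.mem_iff] at hx'
              rw [hcsup]
              rcases hx' with rfl | rfl
              · exact List.mem_cons_of_mem _ (List.mem_append.mpr (Or.inl hzs))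
              · exact List.mem_cons_of_mem _ (List.mem_append.mpr (Or.inl hzt))
          have heq := hu _ hchordc
          have : s((us : V), (ut : V)) = Sym2.map (cf a) s(Sum.inl us, Sum.inl ut) := by
            simp [Sym2.map_pair_eq]
          rw [this, heq, hmape]
        · exact absurd (hmixed s t hsp htr hadjst) hgne
      · rcases hWsplit t (hgsup t (by simp)) with htp | htr
        · have := hmixed t s htp hsr hadjst.symm
          rw [Sym2.eq_swap] at this
          exact absurd this hgne
        · -- both ends on the X-path: induced, so it is an edge of W
          have hmem : s(s, t) ∈ r.reverse.edges := by
            rw [Walk.edges_reverse, List.mem_reverse]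
            exact hrind s t hsr htr hadjst
          exact absurd (by
            rw [hWedges]
            exact List.mem_cons_of_mem _ (List.mem_append.mpr
              (Or.inr (List.mem_cons_of_mem _ hmem))) : s(s, t) ∈ W.edges) hgne


lemma mem_support_closed_iff {u : V} (p : G.Walk u u) (hp : p ≠ Walk.nil) (z : V) :
    z ∈ p.support ↔ z ∈ p.support.tail := by
  constructor
  · intro hz
    rw [Walk.mem_support_iff] at hz
    rcases hz with rfl | hz
    · rcases (Walk.not_nil_iff.mp (fun hn => hp hn.eq_nil)) with ⟨m, h, q, rfl⟩
      rw [Walk.support_cons]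
      simpa using q.end_mem_support
    · exact hz
  · intro hz
    rw [Walk.mem_support_iff]
    exact Or.inr hz


lemma sq_inr {A B : V} (hnoc : ¬ ∃ y ∈ Y, G.Adj y A ∧ G.Adj y B)
    (GY : SimpleGraph (↥Y ⊕ Unit))
    (hadj1 : ∀ u v : ↥Y, GY.Adj (Sum.inl u) (Sum.inl v) ↔ G.Adj u v)
    (hadj2 : ∀ u : ↥Y, GY.Adj (Sum.inr ()) (Sum.inl u) ↔ ((u : V) = A ∨ (u : V) = B))
    (q r s : ↥Y ⊕ Unit)
    (h12 : GY.Adj (Sum.inr ()) q) (h23 : GY.Adj q r) (h34 : GY.Adj r s)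
    (h41 : GY.Adj s (Sum.inr ()))
    (hne13 : (Sum.inr () : ↥Y ⊕ Unit) ≠ r) (hne24 : q ≠ s) : False := by
  obtain ⟨uq, rfl⟩ := eq_inl_of_ne_inr q (fun hh => h12.ne' (hh ▸ rfl))
  obtain ⟨us, rfl⟩ := eq_inl_of_ne_inr s (fun hh => h41.ne (hh ▸ rfl))
  obtain ⟨ur, rfl⟩ := eq_inl_of_ne_inr r (fun hh => hne13 (hh ▸ rfl))
  have hq := (hadj2 uq).mp h12
  have hs := (hadj2 us).mp h41.symm
  have hadjq : G.Adj (ur : V) (uq : V) := ((hadj1 uq ur).mp h23).symm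
  have hadjs : G.Adj (ur : V) (us : V) := (hadj1 ur us).mp h34
  rcases hq with hqA | hqB
  · rcases hs with hsA | hsB
    · exact hne24 (congrArg Sum.inl (Subtype.ext (hqA.trans hsA.symm)))
    · exact hnoc ⟨(ur : V), ur.2, hqA ▸ hadjq, hsB ▸ hadjs⟩
  · rcases hs with hsA | hsB
    · exact hnoc ⟨(ur : V), ur.2, hsA ▸ hadjs, hqB ▸ hadjq⟩
    · exact hne24 (congrArg Sum.inl (Subtype.ext (hqB.trans hsB.symm)))

lemma no_square {A B : V} (hsq : ¬ HasSquare G)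
    (hnoc : ¬ ∃ y ∈ Y, G.Adj y A ∧ G.Adj y B)
    (GY : SimpleGraph (↥Y ⊕ Unit))
    (hadj1 : ∀ u v : ↥Y, GY.Adj (Sum.inl u) (Sum.inl v) ↔ G.Adj u v)
    (hadj2 : ∀ u : ↥Y, GY.Adj (Sum.inr ()) (Sum.inl u) ↔ ((u : V) = A ∨ (u : V) = B)) :
    ¬ HasSquare GY := by
  rintro ⟨p, q, r, s, h1, h2, h3, h4, hn1, hn2, hne1, hne2⟩
  by_cases hp : p = Sum.inr ()
  · subst hp
    exact sq_inr hnoc GY hadj1 hadj2 q r s h1 h2 h3 h4 hne1 hne2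
  by_cases hq : q = Sum.inr ()
  · subst hq
    exact sq_inr hnoc GY hadj1 hadj2 r s p h2 h3 h4 h1 hne2 hne1.symm
  by_cases hr : r = Sum.inr ()
  · subst hr
    exact sq_inr hnoc GY hadj1 hadj2 s p q h3 h4 h1 h2 hne1.symm hne2.symm
  by_cases hs : s = Sum.inr ()
  · subst hs
    exact sq_inr hnoc GY hadj1 hadj2 p q r h4 h1 h2 h3 hne2.symm hne1
  obtain ⟨up, rfl⟩ := eq_inl_of_ne_inr p hp
  obtain ⟨uq, rfl⟩ := eq_inl_of_ne_inr q hq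
  obtain ⟨ur, rfl⟩ := eq_inl_of_ne_inr r hr
  obtain ⟨us, rfl⟩ := eq_inl_of_ne_inr s hs
  refine hsq ⟨(up : V), (uq : V), (ur : V), (us : V),
    (hadj1 _ _).mp h1, (hadj1 _ _).mp h2, (hadj1 _ _).mp h3, (hadj1 _ _).mp h4,
    fun h => hn1 ((hadj1 _ _).mpr h), fun h => hn2 ((hadj1 _ _).mpr h),
    fun h => hne1 (congrArg Sum.inl (Subtype.ext h)),
    fun h => hne2 (congrArg Sum.inl (Subtype.ext h))⟩


end Stmt19Aux

/-- If, in a {square,unichord}-free graph of maximum degree 3 with a proper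
2-cutset split `(X, Y, a, b)`, the vertices `a` and `b` have unique neighbours
`a' ≠ b'` in `Y` and no vertex of `Y` is adjacent to both `a'` and `b'`, then


the contracted graph `G_Y` is {square,unichord}-free. -/
theorem stmt19 {V : Type} [Fintype V] (G : SimpleGraph V)
    (hsq : ¬ HasSquare G) (huf : UnichordFree G)
    (hdeg : ∀ v, (G.neighborSet v).ncard ≤ 3)
    (X Y : Set V) (a b : V) (hsplit : IsProper2CutsetSplit G X Y a b)
    (a' b' : V) (ha' : G.neighborSet a ∩ Y = {a'}) (hb' : G.neighborSet b ∩ Y = {b'})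
    (hab' : a' ≠ b') (hnoc : ¬ ∃ y ∈ Y, G.Adj y a' ∧ G.Adj y b') :
    ¬ HasSquare (ContractedGY G Y a' b') ∧ UnichordFree (ContractedGY G Y a' b') := by
  classical
  set GY := ContractedGY G Y a' b' with hGY
  have hadj1 : ∀ u v : ↥Y, GY.Adj (Sum.inl u) (Sum.inl v) ↔ G.Adj u v :=
    fun u v => Stmt19Aux.cgy_adj_inl_inl u v
  have hadj2 : ∀ u : ↥Y, GY.Adj (Sum.inr ()) (Sum.inl u) ↔ ((u : V) = a' ∨ (u : V) = b') :=
    fun u => Stmt19Aux.cgy_adj_inr_inl u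
  constructor
  · exact Stmt19Aux.no_square hsq hnoc GY hadj1 hadj2
  · intro v c hc hchord
    obtain ⟨w0, hw0p, hw0S⟩ := hsplit.hXpath
    obtain ⟨r, hrp, hrS, hrind⟩ := Stmt19Aux.exists_induced_path (X ∪ {a, b}) ⟨w0, hw0S⟩
    rcases Classical.em (Sum.inr () ∈ c.support) with hinr | hinr
    · have hc' := hc.rotate hinr
      have hedge : ∀ e', e' ∈ (c.rotate _ hinr).edges ↔ e' ∈ c.edges :=
        fun e' => (c.rotate_edges _ hinr).mem_iff
      have hsupiff : ∀ z, z ∈ (c.rotate _ hinr).support ↔ z ∈ c.support := by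
        intro z
        rw [Stmt19Aux.mem_support_closed_iff _ hc'.ne_nil,
            Stmt19Aux.mem_support_closed_iff _ hc.ne_nil]
        exact (c.support_rotate _ hinr).mem_iff
      have hiff : ∀ e, IsChord GY (c.rotate _ hinr) e ↔ IsChord GY c e := by
        intro e
        constructor
        · rintro ⟨g1, g2, g3⟩
          exact ⟨g1, fun hh => g2 ((hedge e).mpr hh), fun z hz => (hsupiff z).mp (g3 z hz)⟩
        · rintro ⟨g1, g2, g3⟩
          exact ⟨g1, fun hh => g2 ((hedge e).mp hh), fun z hz => (hsupiff z).mpr (g3 z hz)⟩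
      have hchord' : ∃! e, IsChord GY (c.rotate _ hinr) e := by
        obtain ⟨e, he, hu⟩ := hchord
        exact ⟨e, (hiff e).mpr he, fun g hg => hu g ((hiff g).mp hg)⟩
      have hnn : ¬(c.rotate _ hinr).Nil := fun hn => hc'.ne_nil hn.eq_nil
      obtain ⟨m, h₁, rest, heq⟩ := Walk.not_nil_iff.mp hnn
      obtain ⟨x, rfl⟩ := Stmt19Aux.eq_inl_of_ne_inr m (fun hh => ((hh ▸ h₁).ne rfl))
      have hrevnn : ¬rest.reverse.Nil := Walk.not_nil_of_ne (by simp)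
      obtain ⟨w', h₂', q'', hreq⟩ := Walk.not_nil_iff.mp hrevnn
      obtain ⟨y, rfl⟩ := Stmt19Aux.eq_inl_of_ne_inr w' (fun hh => ((hh ▸ h₂').ne rfl))
      have hrest : rest = q''.reverse.concat h₂'.symm := by
        rw [← Walk.reverse_reverse rest, hreq, Walk.reverse_cons]
        rfl
      rw [hrest] at heq
      rw [heq] at hc' hchord'
      have hxy : x ≠ y := by
        rintro rfl
        have h := hc'.isTrail.edges_nodup
        have hed : (Walk.cons h₁ (q''.reverse.concat h₂'.symm)).edges
            = s(Sum.inr (), Sum.inl x) :: (q''.reverse.edges ++ [s(Sum.inl x, Sum.inr ())]) := by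
          simp [Walk.edges_cons, Walk.edges_concat]
        rw [hed] at h
        exact (List.nodup_cons.mp h).1 (by rw [Sym2.eq_swap]; simp)
      have hxval := (hadj2 x).mp h₁
      have hyval := (hadj2 y).mp h₂'
      rcases hxval with hxa | hxb
      · have hyb : (y : V) = b' := by
          rcases hyval with hya | hyb
          · exact absurd (Subtype.ext (hya.trans hxa.symm)) (Ne.symm hxy)
          · exact hyb
        exact Stmt19Aux.case2core huf X a b hsplit.hdisj hsplit.haY hsplit.hbY hsplit.hne
          hsplit.hsep a' b' ha' hb' r hrp hrS hrind GY hadj1 hadj2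
          x y hxa hyb q''.reverse h₁ h₂'.symm hc' hchord'
      · have hya : (y : V) = a' := by
          rcases hyval with hya | hyb
          · exact hya
          · exact absurd (Subtype.ext (hyb.trans hxb.symm)) (Ne.symm hxy)
        have hadj2' : ∀ u : ↥Y, GY.Adj (Sum.inr ()) (Sum.inl u) ↔
            ((u : V) = b' ∨ (u : V) = a') := fun u => (hadj2 u).trans or_comm
        have hrS' : ∀ z ∈ r.reverse.support, z ∈ X ∪ {b, a} := by
          intro z hz
          rw [Walk.support_reverse, List.mem_reverse] at hz
          rw [Set.pair_comm b a]
          exact hrS z hz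
        have hrind' : ∀ u w, u ∈ r.reverse.support → w ∈ r.reverse.support →
            G.Adj u w → s(u, w) ∈ r.reverse.edges := by
          intro u w hu hw hadj
          rw [Walk.support_reverse, List.mem_reverse] at hu hw
          rw [Walk.edges_reverse, List.mem_reverse]
          exact hrind u w hu hw hadj
        exact Stmt19Aux.case2core huf X b a hsplit.hdisj hsplit.hbY hsplit.haY
          hsplit.hne.symm hsplit.hsep b' a' hb' ha' r.reverse hrp.reverse hrS' hrind'
          GY hadj1 hadj2' x y hxb hya q''.reverse h₁ h₂'.symm hc' hchord'
    · rcases v with vv | u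
      · exact Stmt19Aux.case1core huf GY hadj1 vv c hc hinr hchord
      · cases u; exact hinr c.start_mem_support
end
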